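/- arXiv:0908.0506 — 8 statements merged into one kernel-verified Lean document; each statement's English description precedes it below -/
import Mathlib

section
/- A weight vector r is an optimal solution of the approximate linear program (maximize ν^⊤Φr subject to Φr ≤ TΦr) if and only if r is an optimal solution of the program: minimize ||J* − Φr||_{1,ν} subject to Φr ≤ TΦr. In particular, for every r with Φr ≤ TΦr one has ||J* − Φr||_{1,ν} = ν^⊤(J* − Φr). -/
open Finset Matrix

noncomputable section

/-- The Bellman operator. -/
def bellmanT {X A : Type*} [Fintype X] [Fintype A] [Nonempty A]
    (g : X → A → ℝ) (P : A → X → X → ℝ) (α : ℝ) (J : X → ℝ) : X → ℝ :=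
  fun x => Finset.univ.inf' Finset.univ_nonempty fun a => g x a + α * ∑ x', P a x x' * J x'

/-- The Bellman operator of a stationary policy. -/
def polT {X A : Type*} [Fintype X]
    (g : X → A → ℝ) (P : A → X → X → ℝ) (α : ℝ) (μ : X → A) (J : X → ℝ) : X → ℝ :=
  fun x => g x (μ x) + α * ∑ x', P (μ x) x x' * J x'

/-- Transition matrix of a stationary policy. -/
def polMat {X A : Type*} (P : A → X → X → ℝ) (μ : X → A) : Matrix X X ℝ :=
  Matrix.of fun x x' => P (μ x) x x'

/-- Δ_μ = Σ_k (α P_μ)^k = (I - α P_μ)⁻¹. -/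
def deltaMat {X A : Type*} [Fintype X] [DecidableEq X]
    (P : A → X → X → ℝ) (α : ℝ) (μ : X → A) : Matrix X X ℝ :=
  ∑' k : ℕ, (α • polMat P μ) ^ k

/-- π_{μ,ν} = (1-α) ν^⊤ (I - α P_μ)⁻¹. -/
def piDist {X A : Type*} [Fintype X] [DecidableEq X]
    (P : A → X → X → ℝ) (α : ℝ) (μ : X → A) (ν : X → ℝ) : X → ℝ :=
  fun x => (1 - α) * ∑ x0, ν x0 * deltaMat P α μ x0 x

/-- Cost-to-go of policy μ: Σ_t α^t P_μ^t g_μ. -/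
def Jpol {X A : Type*} [Fintype X] [DecidableEq X]
    (g : X → A → ℝ) (P : A → X → X → ℝ) (α : ℝ) (μ : X → A) : X → ℝ :=
  fun x => ∑' t : ℕ, α ^ t * (((polMat P μ) ^ t) *ᵥ (fun y => g y (μ y))) x

/-- Linear combination of basis functions. -/
def phiR {X : Type*} {K : ℕ} (Φ : X → Fin K → ℝ) (r : Fin K → ℝ) : X → ℝ :=
  fun x => ∑ i, Φ x i * r i

/-- ν-weighted 1-norm. -/
def wnorm1 {X : Type*} [Fintype X] (ν J : X → ℝ) : ℝ := ∑ x, ν x * |J x|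

/-- Max norm. -/
def supNorm {X : Type*} [Fintype X] [Nonempty X] (J : X → ℝ) : ℝ :=
  Finset.univ.sup' Finset.univ_nonempty fun x => |J x|

/-- ψ-weighted max norm ‖J‖_{∞,1/ψ}. -/
def wsupNorm {X : Type*} [Fintype X] [Nonempty X] (ψ J : X → ℝ) : ℝ :=
  Finset.univ.sup' Finset.univ_nonempty fun x => |J x| / ψ x

/-- β(ψ) = max_{x,a} (Σ_{x'} P_a(x,x') ψ(x')) / ψ(x). -/
def betaPsi {X A : Type*} [Fintype X] [Nonempty X] [Fintype A] [Nonempty A]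
    (P : A → X → X → ℝ) (ψ : X → ℝ) : ℝ :=
  Finset.univ.sup' Finset.univ_nonempty fun p : X × A => (∑ x', P p.2 p.1 x' * ψ x') / ψ p.1

/-- Feasible values of the LP defining ℓ(r,θ). -/
def ellSet {X A : Type*} [Fintype X] [Fintype A] [Nonempty A] {K : ℕ}
    (g : X → A → ℝ) (P : A → X → X → ℝ) (α : ℝ) (π : X → ℝ)
    (Φ : X → Fin K → ℝ) (r : Fin K → ℝ) (θ : ℝ) : Set ℝ :=
  {v | ∃ (s : X → ℝ) (γ : ℝ), v = γ / (1 - α) ∧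
    (∀ x, phiR Φ r x - bellmanT g P α (phiR Φ r) x ≤ s x + γ) ∧
    (∑ x, π x * s x ≤ θ) ∧ (∀ x, 0 ≤ s x)}

/-- ℓ(r,θ): optimal value of the LP (3.2). -/
def ellVal {X A : Type*} [Fintype X] [Fintype A] [Nonempty A] {K : ℕ}
    (g : X → A → ℝ) (P : A → X → X → ℝ) (α : ℝ) (π : X → ℝ)
    (Φ : X → Fin K → ℝ) (r : Fin K → ℝ) (θ : ℝ) : ℝ :=
  sInf (ellSet g P α π Φ r θ)

/-- Shifted monotonicity of the Bellman operator. -/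
lemma bellman_shift_mono {X A : Type*} [Fintype X] [Fintype A] [Nonempty A]
    (g : X → A → ℝ) (P : A → X → X → ℝ) (α : ℝ) (hα0 : 0 ≤ α)
    (hP0 : ∀ a x x', 0 ≤ P a x x') (hP1 : ∀ a x, ∑ x', P a x x' = 1)
    (J J' : X → ℝ) (c : ℝ) (h : ∀ x, J x ≤ J' x + c) :
    ∀ x, bellmanT g P α J x ≤ bellmanT g P α J' x + α * c := by
  intro x
  unfold bellmanT
  obtain ⟨a, -, ha⟩ := Finset.exists_mem_eq_inf' (Finset.univ_nonempty (α := A))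
    (fun a => g x a + α * ∑ x', P a x x' * J' x')
  rw [ha]
  refine le_trans (Finset.inf'_le _ (Finset.mem_univ a)) ?_
  have hsum : ∑ x', P a x x' * J x' ≤ (∑ x', P a x x' * J' x') + c := by
    have : ∑ x', P a x x' * J x' ≤ ∑ x', P a x x' * (J' x' + c) := by
      apply Finset.sum_le_sum
      intro i _
      exact mul_le_mul_of_nonneg_left (h i) (hP0 a x i)
    calc ∑ x', P a x x' * J x' ≤ ∑ x', P a x x' * (J' x' + c) := this
      _ = (∑ x', P a x x' * J' x') + (∑ x', P a x x') * c := by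
          rw [Finset.sum_mul]; rw [← Finset.sum_add_distrib]; exact Finset.sum_congr rfl (fun _ _ => by ring)
      _ = (∑ x', P a x x' * J' x') + c := by rw [hP1]; ring
  nlinarith [mul_le_mul_of_nonneg_left hsum hα0]

/-- A subsolution of Bellman's equation is below J*. -/
lemma subsolution_le_Jstar {X A : Type*} [Fintype X] [Nonempty X] [Fintype A] [Nonempty A]
    (g : X → A → ℝ) (P : A → X → X → ℝ) (α : ℝ) (hα0 : 0 < α) (hα1 : α < 1)
    (hP0 : ∀ a x x', 0 ≤ P a x x') (hP1 : ∀ a x, ∑ x', P a x x' = 1)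
    (Jstar : X → ℝ) (hJstar : bellmanT g P α Jstar = Jstar)
    (J : X → ℝ) (hJ : ∀ x, J x ≤ bellmanT g P α J x) :
    ∀ x, J x ≤ Jstar x := by
  set C : ℝ := Finset.univ.sup' Finset.univ_nonempty (fun x => J x - Jstar x) with hC
  have hCmem : ∀ x, J x ≤ Jstar x + C := by
    intro x
    have : J x - Jstar x ≤ C := hC ▸ Finset.le_sup' (fun x => J x - Jstar x) (Finset.mem_univ x)
    linarith
  -- iterates
  have key : ∀ n : ℕ, ∀ x, J x ≤ Jstar x + α ^ n * C := by
    intro n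
    induction n with
    | zero => simpa using hCmem
    | succ n ih =>
      -- from ∀ x, J x ≤ Jstar x + α^n C we get J ≤ TJ ≤ T(Jstar + α^n C) = Jstar + α^{n+1} C
      intro x
      have h1 := bellman_shift_mono g P α hα0.le hP0 hP1 J Jstar (α ^ n * C) ih x
      rw [hJstar] at h1
      have := (hJ x).trans h1
      calc J x ≤ Jstar x + α * (α ^ n * C) := this
        _ = Jstar x + α ^ (n + 1) * C := by ring
  intro x
  have hlim : Filter.Tendsto (fun n : ℕ => Jstar x + α ^ n * C) Filter.atTop
      (nhds (Jstar x)) := by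
    have h0 : Filter.Tendsto (fun n : ℕ => α ^ n) Filter.atTop (nhds 0) :=
      tendsto_pow_atTop_nhds_zero_of_lt_one hα0.le hα1
    have := (h0.mul_const C).const_add (Jstar x)
    simpa using this
  exact ge_of_tendsto' hlim (fun n => key n x)

/-- r is optimal for the ALP iff it is optimal for the program minimizing
‖J* - Φr‖_{1,ν} subject to Φr ≤ TΦr; and for every feasible r,
‖J* - Φr‖_{1,ν} = ν^⊤(J* - Φr). -/
theorem alp_equiv_min_one_norm
    {X A : Type*} [Fintype X] [Nonempty X] [Fintype A] [Nonempty A] {K : ℕ}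
    (g : X → A → ℝ) (P : A → X → X → ℝ) (α : ℝ)
    (hα0 : 0 < α) (hα1 : α < 1)
    (hP0 : ∀ a x x', 0 ≤ P a x x') (hP1 : ∀ a x, ∑ x', P a x x' = 1)
    (Jstar : X → ℝ) (hJstar : bellmanT g P α Jstar = Jstar)
    (Φ : X → Fin K → ℝ) (ν : X → ℝ)
    (hν0 : ∀ x, 0 ≤ ν x) (hν1 : ∑ x, ν x = 1) :
    (∀ r : Fin K → ℝ, (∀ x, phiR Φ r x ≤ bellmanT g P α (phiR Φ r) x) →
      wnorm1 ν (fun x => Jstar x - phiR Φ r x) = ∑ x, ν x * (Jstar x - phiR Φ r x)) ∧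
    (∀ r : Fin K → ℝ,
      ((∀ x, phiR Φ r x ≤ bellmanT g P α (phiR Φ r) x) ∧
        (∀ r' : Fin K → ℝ, (∀ x, phiR Φ r' x ≤ bellmanT g P α (phiR Φ r') x) →
          ∑ x, ν x * phiR Φ r' x ≤ ∑ x, ν x * phiR Φ r x))
      ↔
      ((∀ x, phiR Φ r x ≤ bellmanT g P α (phiR Φ r) x) ∧
        (∀ r' : Fin K → ℝ, (∀ x, phiR Φ r' x ≤ bellmanT g P α (phiR Φ r') x) →
          wnorm1 ν (fun x => Jstar x - phiR Φ r x) ≤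
            wnorm1 ν (fun x => Jstar x - phiR Φ r' x)))) := by
  have habs : ∀ r : Fin K → ℝ, (∀ x, phiR Φ r x ≤ bellmanT g P α (phiR Φ r) x) →
      wnorm1 ν (fun x => Jstar x - phiR Φ r x) = ∑ x, ν x * (Jstar x - phiR Φ r x) := by
    intro r hr
    have hle := subsolution_le_Jstar g P α hα0 hα1 hP0 hP1 Jstar hJstar (phiR Φ r) hr
    unfold wnorm1
    apply Finset.sum_congr rfl
    intro x _
    show ν x * |Jstar x - phiR Φ r x| = ν x * (Jstar x - phiR Φ r x)
    rw [abs_of_nonneg (by linarith [hle x])]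
  refine ⟨habs, ?_⟩
  intro r
  constructor
  · rintro ⟨hfeas, hopt⟩
    refine ⟨hfeas, fun r' hr' => ?_⟩
    rw [habs r hfeas, habs r' hr']
    have := hopt r' hr'
    simp only [mul_sub, Finset.sum_sub_distrib]
    linarith
  · rintro ⟨hfeas, hopt⟩
    refine ⟨hfeas, fun r' hr' => ?_⟩
    have := hopt r' hr'
    rw [habs r hfeas, habs r' hr'] at this
    simp only [mul_sub, Finset.sum_sub_distrib] at this
    linarith
end
end

section
/- For every r ∈ ℝ^K and every θ ≥ 0, ℓ(r,θ) ≤ ((1+α)/(1−α)) · ||J* − Φr||_∞. -/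
open Finset Matrix

noncomputable section

section MyAux

variable {X : Type*} [Fintype X] [DecidableEq X]

lemma myStochPow (M : Matrix X X ℝ) (h0 : ∀ x y, 0 ≤ M x y)
    (h1 : ∀ x, ∑ y, M x y = 1) (k : ℕ) :
    (∀ x y, 0 ≤ (M ^ k) x y) ∧ (∀ x, ∑ y, (M ^ k) x y = 1) := by
  induction k with
  | zero =>
    refine ⟨fun x y => ?_, fun x => ?_⟩
    · simp only [pow_zero, Matrix.one_apply]
      split <;> norm_num
    · simp [Matrix.one_apply]
  | succ n ih =>
    refine ⟨fun x y => ?_, fun x => ?_⟩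
    · rw [pow_succ, Matrix.mul_apply]
      exact Finset.sum_nonneg fun z _ => mul_nonneg (ih.1 x z) (h0 z y)
    · rw [pow_succ]
      simp only [Matrix.mul_apply]
      rw [Finset.sum_comm]
      calc ∑ z, ∑ y, (M ^ n) x z * M z y = ∑ z, (M ^ n) x z * ∑ y, M z y := by
            simp [Finset.mul_sum]
        _ = 1 := by simp [h1, ih.2 x]

lemma myPowEntryLe (M : Matrix X X ℝ) (h0 : ∀ x y, 0 ≤ M x y)
    (h1 : ∀ x, ∑ y, M x y = 1) (k : ℕ) (x y : X) : (M ^ k) x y ≤ 1 := by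
  calc (M ^ k) x y ≤ ∑ y', (M ^ k) x y' :=
        Finset.single_le_sum (fun z _ => (myStochPow M h0 h1 k).1 x z) (Finset.mem_univ y)
    _ = 1 := (myStochPow M h0 h1 k).2 x

lemma mySummableEntry (M : Matrix X X ℝ) (h0 : ∀ x y, 0 ≤ M x y)
    (h1 : ∀ x, ∑ y, M x y = 1) {α : ℝ} (hα0 : 0 ≤ α) (hα1 : α < 1) (x y : X) :
    Summable (fun k : ℕ => ((α • M) ^ k) x y) := by
  refine Summable.of_nonneg_of_le ?_ ?_ (summable_geometric_of_lt_one hα0 hα1)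
  · intro k
    rw [smul_pow, Matrix.smul_apply, smul_eq_mul]
    exact mul_nonneg (pow_nonneg hα0 k) ((myStochPow M h0 h1 k).1 x y)
  · intro k
    rw [smul_pow, Matrix.smul_apply, smul_eq_mul]
    calc α ^ k * (M ^ k) x y ≤ α ^ k * 1 :=
          mul_le_mul_of_nonneg_left (myPowEntryLe M h0 h1 k x y) (pow_nonneg hα0 k)
      _ = α ^ k := mul_one _

lemma mySummableMat (M : Matrix X X ℝ) (h0 : ∀ x y, 0 ≤ M x y)
    (h1 : ∀ x, ∑ y, M x y = 1) {α : ℝ} (hα0 : 0 ≤ α) (hα1 : α < 1) :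
    Summable (fun k : ℕ => (α • M) ^ k) := by
  have : Summable (fun k : ℕ => ((α • M) ^ k : X → X → ℝ)) := by
    apply Pi.summable.mpr
    intro x
    rw [Pi.summable]
    intro y
    exact mySummableEntry M h0 h1 hα0 hα1 x y
  exact this

end MyAux

/-- ℓ(r,θ) ≤ ((1+α)/(1-α)) ‖J* - Φr‖_∞ for all r and θ ≥ 0. -/
theorem ell_le_sup_norm_bound
    {X A : Type*} [Fintype X] [Nonempty X] [Fintype A] [Nonempty A] [DecidableEq X] {K : ℕ}
    (g : X → A → ℝ) (P : A → X → X → ℝ) (α : ℝ)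
    (hα0 : 0 < α) (hα1 : α < 1)
    (hP0 : ∀ a x x', 0 ≤ P a x x') (hP1 : ∀ a x, ∑ x', P a x x' = 1)
    (Jstar : X → ℝ) (hJstar : bellmanT g P α Jstar = Jstar)
    (μs : X → A) (hμs : polT g P α μs Jstar = bellmanT g P α Jstar)
    (ν : X → ℝ) (hν0 : ∀ x, 0 ≤ ν x) (hν1 : ∑ x, ν x = 1)
    (Φ : X → Fin K → ℝ) (r : Fin K → ℝ) (θ : ℝ) (hθ : 0 ≤ θ) :
    ellVal g P α (piDist P α μs ν) Φ r θ ≤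
      ((1 + α) / (1 - α)) * supNorm (fun x => Jstar x - phiR Φ r x) := by
  set M := polMat P μs with hMdef
  have hM0 : ∀ x y, 0 ≤ M x y := fun x y => hP0 _ x y
  have hM1 : ∀ x, ∑ y, M x y = 1 := fun x => hP1 _ x
  have h1α : (0:ℝ) < 1 - α := by linarith
  set D := supNorm (fun x => Jstar x - phiR Φ r x) with hDdef
  have hD : ∀ x, |Jstar x - phiR Φ r x| ≤ D := fun x =>
    Finset.le_sup' (fun x => |Jstar x - phiR Φ r x|) (Finset.mem_univ x)
  have hD0 : 0 ≤ D := by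
    obtain ⟨x⟩ := (inferInstance : Nonempty X)
    exact le_trans (abs_nonneg _) (hD x)
  -- contraction bound
  have hcontr : ∀ x, bellmanT g P α Jstar x ≤ bellmanT g P α (phiR Φ r) x + α * D := by
    intro x
    obtain ⟨a0, -, ha0⟩ := Finset.exists_mem_eq_inf' Finset.univ_nonempty
      (fun a => g x a + α * ∑ x', P a x x' * phiR Φ r x')
    have hsum : ∑ x', P a0 x x' * Jstar x' ≤ (∑ x', P a0 x x' * phiR Φ r x') + D := by
      have h1 : ∑ x', P a0 x x' * Jstar x'
          ≤ ∑ x', (P a0 x x' * phiR Φ r x' + P a0 x x' * D) := by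
        apply Finset.sum_le_sum
        intro x' _
        have h2 := (abs_le.mp (hD x')).2
        nlinarith [hP0 a0 x x']
      have h3 : ∑ x', (P a0 x x' * phiR Φ r x' + P a0 x x' * D)
          = (∑ x', P a0 x x' * phiR Φ r x') + D := by
        rw [Finset.sum_add_distrib, ← Finset.sum_mul, hP1 a0 x, one_mul]
      linarith [h1, h3.le, h3.ge]
    calc bellmanT g P α Jstar x ≤ g x a0 + α * ∑ x', P a0 x x' * Jstar x' :=
          Finset.inf'_le _ (Finset.mem_univ a0)
      _ ≤ g x a0 + α * ((∑ x', P a0 x x' * phiR Φ r x') + D) := by nlinarith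
      _ = (g x a0 + α * ∑ x', P a0 x x' * phiR Φ r x') + α * D := by ring
      _ = bellmanT g P α (phiR Φ r) x + α * D := by rw [bellmanT, ← ha0]
  have hfeas : ∀ x, phiR Φ r x - bellmanT g P α (phiR Φ r) x ≤ (1 + α) * D := by
    intro x
    have h1 : phiR Φ r x ≤ Jstar x + D := by
      have := (abs_le.mp (hD x)).1; linarith
    have h2 : Jstar x ≤ bellmanT g P α (phiR Φ r) x + α * D := by
      have := hcontr x
      rw [hJstar] at this
      linarith
    nlinarith
  -- piDist facts
  have hsumM := mySummableMat M hM0 hM1 hα0.le hα1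
  have hdelta : ∀ x0 x, deltaMat P α μs x0 x = ∑' k : ℕ, ((α • M) ^ k) x0 x := by
    intro x0 x
    have h1 : deltaMat P α μs x0 = (∑' k : ℕ, (α • M) ^ k) x0 := rfl
    rw [deltaMat]
    exact ((Pi.hasSum.mp (Pi.hasSum.mp hsumM.hasSum x0)) x).tsum_eq.symm
  have hdelta0 : ∀ x0 x, 0 ≤ deltaMat P α μs x0 x := by
    intro x0 x
    rw [hdelta]
    apply tsum_nonneg
    intro k
    rw [smul_pow, Matrix.smul_apply, smul_eq_mul]
    exact mul_nonneg (pow_nonneg hα0.le k) ((myStochPow M hM0 hM1 k).1 x0 x)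
  have hdeltaDiag : ∀ x, (1:ℝ) ≤ deltaMat P α μs x x := by
    intro x
    rw [hdelta]
    have h0 : ((α • M) ^ 0) x x = 1 := by simp [Matrix.one_apply]
    calc (1:ℝ) = ((α • M) ^ 0) x x := h0.symm
      _ ≤ ∑' k : ℕ, ((α • M) ^ k) x x := by
          apply Summable.le_tsum (mySummableEntry M hM0 hM1 hα0.le hα1 x x)
          intro k _
          rw [smul_pow, Matrix.smul_apply, smul_eq_mul]
          exact mul_nonneg (pow_nonneg hα0.le k) ((myStochPow M hM0 hM1 k).1 x x)
  set π := piDist P α μs ν with hπdef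
  have hπ0 : ∀ x, 0 ≤ π x := by
    intro x
    apply mul_nonneg h1α.le
    exact Finset.sum_nonneg fun y _ => mul_nonneg (hν0 y) (hdelta0 y x)
  obtain ⟨x0, -, hx0ne⟩ : ∃ x0 ∈ Finset.univ, ν x0 ≠ 0 := by
    apply Finset.exists_ne_zero_of_sum_ne_zero
    rw [hν1]; norm_num
  have hx0 : 0 < ν x0 := lt_of_le_of_ne (hν0 x0) (Ne.symm hx0ne)
  have hπx0 : 0 < π x0 := by
    have h1 : ν x0 * 1 ≤ ν x0 * deltaMat P α μs x0 x0 :=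
      mul_le_mul_of_nonneg_left (hdeltaDiag x0) (hν0 x0)
    have h2 : ν x0 * deltaMat P α μs x0 x0 ≤ ∑ y, ν y * deltaMat P α μs y x0 :=
      Finset.single_le_sum (fun y _ => mul_nonneg (hν0 y) (hdelta0 y x0)) (Finset.mem_univ x0)
    have : 0 < ∑ y, ν y * deltaMat P α μs y x0 := by linarith
    exact mul_pos h1α this
  -- bddBelow
  have hbdd : BddBelow (ellSet g P α π Φ r θ) := by
    refine ⟨(phiR Φ r x0 - bellmanT g P α (phiR Φ r) x0 - θ / π x0) / (1 - α), ?_⟩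
    rintro v ⟨s, γ, rfl, hc1, hc2, hc3⟩
    have hs0 : π x0 * s x0 ≤ θ := by
      calc π x0 * s x0 ≤ ∑ x, π x * s x :=
            Finset.single_le_sum (fun x _ => mul_nonneg (hπ0 x) (hc3 x)) (Finset.mem_univ x0)
        _ ≤ θ := hc2
    have hs1 : s x0 ≤ θ / π x0 := by
      rw [le_div_iff₀ hπx0]
      nlinarith
    have hγ : phiR Φ r x0 - bellmanT g P α (phiR Φ r) x0 - θ / π x0 ≤ γ := by
      have := hc1 x0
      linarith
    exact div_le_div_of_nonneg_right hγ h1α.le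
  -- membership
  have hmem : ((1 + α) / (1 - α)) * D ∈ ellSet g P α π Φ r θ := by
    refine ⟨fun _ => 0, (1 + α) * D, ?_, ?_, ?_, fun _ => le_refl 0⟩
    · rw [div_mul_eq_mul_div]
    · intro x
      simpa using hfeas x
    · simp [hθ]
  exact csInf_le hbdd hmem
end
end

section
/- Fix r ∈ ℝ^K, let Ω(r) = argmax_{x∈𝒳} (Φr(x) − TΦr(x)), and assume π_{μ*,ν}(Ω(r)) > 0. Then the right partial derivative of ℓ(r,θ) in θ at θ = 0 equals −((1−α) Σ_{x∈Ω(r)} π_{μ*,ν}(x))^{−1}; in fact, for all sufficiently small δ ≥ 0, ℓ(r,δ) = ℓ(r,0) − δ/((1−α) Σ_{x∈Ω(r)} π_{μ*,ν}(x)). -/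
open Finset Matrix

noncomputable section

section Aux
variable {X A : Type*} [Fintype X] [DecidableEq X]

lemma pow_entry_nonneg (P : A → X → X → ℝ) (μ : X → A) (hP0 : ∀ a x x', 0 ≤ P a x x') :
    ∀ (k : ℕ) (x y : X), 0 ≤ (polMat P μ ^ k) x y := by
  intro k
  induction k with
  | zero => intro x y; simp [Matrix.one_apply]; positivity
  | succ n ih =>
    intro x y
    rw [pow_succ, Matrix.mul_apply]
    exact Finset.sum_nonneg fun z _ => mul_nonneg (ih x z) (hP0 _ _ _)

lemma pow_row_sum (P : A → X → X → ℝ) (μ : X → A) (hP1 : ∀ a x, ∑ x', P a x x' = 1) :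
    ∀ (k : ℕ) (x : X), ∑ y, (polMat P μ ^ k) x y = 1 := by
  intro k
  induction k with
  | zero => intro x; simp [Matrix.one_apply]
  | succ n ih =>
    intro x
    simp only [pow_succ, Matrix.mul_apply]
    rw [Finset.sum_comm]
    have : ∀ z ∈ Finset.univ, (∑ y, (polMat P μ ^ n) x z * polMat P μ z y)
        = (polMat P μ ^ n) x z := by
      intro z _
      rw [← Finset.mul_sum]
      have : ∑ y, polMat P μ z y = 1 := hP1 _ _
      rw [this, mul_one]
    rw [Finset.sum_congr rfl this, ih]

lemma geo_summable (P : A → X → X → ℝ) (μ : X → A) (α : ℝ) (hα0 : 0 < α) (hα1 : α < 1)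
    (hP0 : ∀ a x x', 0 ≤ P a x x') (hP1 : ∀ a x, ∑ x', P a x x' = 1) :
    Summable (fun k : ℕ => (α • polMat P μ) ^ k) := by
  refine Pi.summable.mpr ?_
  intro x
  rw [Pi.summable]
  intro y
  have hb : ∀ k : ℕ, ‖((α • polMat P μ) ^ k) x y‖ ≤ α ^ k := by
    intro k
    have h1 : ((α • polMat P μ) ^ k) x y = α ^ k * (polMat P μ ^ k) x y := by
      rw [smul_pow]; rfl
    have h2 : (polMat P μ ^ k) x y ≤ 1 := by
      have := pow_row_sum P μ hP1 k x
      calc (polMat P μ ^ k) x y ≤ ∑ z, (polMat P μ ^ k) x z :=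
            Finset.single_le_sum (fun z _ => pow_entry_nonneg P μ hP0 k x z) (Finset.mem_univ y)
        _ = 1 := this
    rw [h1, Real.norm_eq_abs, abs_of_nonneg (mul_nonneg (by positivity) (pow_entry_nonneg P μ hP0 k x y))]
    nlinarith [pow_entry_nonneg P μ hP0 k x y, pow_pos hα0 k]
  exact Summable.of_norm_bounded (summable_geometric_of_lt_one hα0.le hα1) hb


lemma delta_nonneg (P : A → X → X → ℝ) (μ : X → A) (α : ℝ) (hα0 : 0 < α) (hα1 : α < 1)
    (hP0 : ∀ a x x', 0 ≤ P a x x') (hP1 : ∀ a x, ∑ x', P a x x' = 1) (x y : X) :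
    0 ≤ deltaMat P α μ x y := by
  have hs := geo_summable P μ α hα0 hα1 hP0 hP1
  have h1 : deltaMat P α μ x y = ∑' k : ℕ, ((α • polMat P μ) ^ k) x y := by
    rw [deltaMat]; erw [tsum_apply hs, tsum_apply (Pi.summable.mp hs x)]
  rw [h1]
  apply tsum_nonneg
  intro k
  have : ((α • polMat P μ) ^ k) x y = α ^ k * (polMat P μ ^ k) x y := by rw [smul_pow]; rfl
  rw [this]
  exact mul_nonneg (by positivity) (pow_entry_nonneg P μ hP0 k x y)

end Aux


lemma lp_val {X : Type*} [Fintype X] [Nonempty X] (F π : X → ℝ) (α : ℝ) (hα1 : α < 1)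
    (hπ : ∀ x, 0 ≤ π x)
    (pΩ : ℝ) (hpΩ : pΩ = ∑ x, Set.indicator {y | ∀ y', F y' ≤ F y} π x) (hpos : 0 < pΩ) :
    ∃ δ₀ > 0, ∀ θ : ℝ, 0 ≤ θ → θ ≤ δ₀ →
      sInf {v | ∃ (s : X → ℝ) (γ : ℝ), v = γ / (1 - α) ∧
        (∀ x, F x ≤ s x + γ) ∧ (∑ x, π x * s x ≤ θ) ∧ (∀ x, 0 ≤ s x)}
      = ((Finset.univ.sup' Finset.univ_nonempty F) - θ / pΩ) / (1 - α) := by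
  classical
  set M : ℝ := Finset.univ.sup' Finset.univ_nonempty F with hM
  set Ω : Set X := {y | ∀ y', F y' ≤ F y} with hΩ
  have h1α : (0:ℝ) < 1 - α := by linarith
  have hpf : pΩ = ∑ x ∈ Finset.univ.filter (· ∈ Ω), π x := by
    rw [hpΩ, Finset.sum_filter]
    congr 1; ext x
    by_cases hx : x ∈ Ω <;> simp [Set.indicator, hx]
  have hMleΩ : ∀ x ∈ Ω, M ≤ F x := fun x hx => Finset.sup'_le _ _ fun y _ => hx y
  have hFleM : ∀ x, F x ≤ M := fun x => Finset.le_sup' _ (Finset.mem_univ x)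
  set B : Finset X := Finset.univ.filter (fun x => x ∉ Ω) with hB
  have hgap : ∀ x ∈ B, 0 < M - F x := by
    intro x hx
    simp only [hB, Finset.mem_filter] at hx
    obtain ⟨y', hy'⟩ := not_forall.mp hx.2
    have h1 : F x < F y' := lt_of_not_ge hy'
    have h2 := hFleM y'
    linarith
  obtain ⟨δ₀, hδ₀pos, hkey⟩ : ∃ δ₀ > 0, ∀ θ : ℝ, 0 ≤ θ → θ ≤ δ₀ →
      ∀ x, x ∉ Ω → F x + θ / pΩ ≤ M := by
    by_cases hBne : B.Nonempty
    · refine ⟨pΩ * B.inf' hBne (fun x => M - F x), ?_, ?_⟩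
      · exact mul_pos hpos ((Finset.lt_inf'_iff _).mpr (fun x hx => hgap x hx))
      · intro θ hθ0 hθ x hxΩ
        have hxB : x ∈ B := by simp [hB, hxΩ]
        have h2 : B.inf' hBne (fun x => M - F x) ≤ M - F x := Finset.inf'_le _ hxB
        have h3 : θ / pΩ ≤ M - F x := by
          rw [div_le_iff₀ hpos]
          nlinarith
        linarith
    · refine ⟨1, one_pos, fun θ _ _ x hxΩ => ?_⟩
      exact absurd (by simp [hB, hxΩ] : x ∈ B)
        (by simp [Finset.not_nonempty_iff_eq_empty.mp hBne])
  refine ⟨δ₀, hδ₀pos, fun θ hθ0 hθδ => ?_⟩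
  set c : ℝ := θ / pΩ with hc
  have hc0 : 0 ≤ c := div_nonneg hθ0 hpos.le
  set v : ℝ := (M - c) / (1 - α) with hv
  have hmem : v ∈ {v | ∃ (s : X → ℝ) (γ : ℝ), v = γ / (1 - α) ∧
      (∀ x, F x ≤ s x + γ) ∧ (∑ x, π x * s x ≤ θ) ∧ (∀ x, 0 ≤ s x)} := by
    refine ⟨fun x => if x ∈ Ω then c else 0, M - c, rfl, ?_, ?_, ?_⟩
    · intro x
      by_cases hx : x ∈ Ω
      · simp only [hx, if_pos]
        have := hFleM x; linarith
      · simp only [hx, if_neg, not_false_iff]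
        have := hkey θ hθ0 hθδ x hx
        linarith
    · have : (∑ x, π x * (if x ∈ Ω then c else 0)) = pΩ * c := by
        rw [hpf, Finset.sum_mul]
        rw [Finset.sum_filter]
        congr 1; ext x
        by_cases hx : x ∈ Ω <;> simp [hx] <;> ring
      rw [this, hc, mul_div_cancel₀ _ hpos.ne']
    · intro x; by_cases hx : x ∈ Ω <;> simp [hx, hc0]
  have hlb : ∀ w ∈ {v | ∃ (s : X → ℝ) (γ : ℝ), v = γ / (1 - α) ∧
      (∀ x, F x ≤ s x + γ) ∧ (∑ x, π x * s x ≤ θ) ∧ (∀ x, 0 ≤ s x)}, v ≤ w := by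
    rintro w ⟨s, γ, rfl, hc1, hc2, hc3⟩
    have key : M * pΩ ≤ θ + γ * pΩ := by
      have e1 : M * pΩ = ∑ x ∈ Finset.univ.filter (· ∈ Ω), M * π x := by
        rw [hpf, Finset.mul_sum]
      have e2 : (∑ x ∈ Finset.univ.filter (· ∈ Ω), M * π x)
          ≤ ∑ x ∈ Finset.univ.filter (· ∈ Ω), (s x + γ) * π x := by
        apply Finset.sum_le_sum
        intro x hx
        rw [Finset.mem_filter] at hx
        have h1 : M ≤ F x := hMleΩ x hx.2
        have h2 := hc1 x
        exact mul_le_mul_of_nonneg_right (by linarith) (hπ x)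
      have e3 : (∑ x ∈ Finset.univ.filter (· ∈ Ω), (s x + γ) * π x)
          = (∑ x ∈ Finset.univ.filter (· ∈ Ω), π x * s x) + γ * pΩ := by
        rw [hpf, Finset.mul_sum, ← Finset.sum_add_distrib]
        congr 1; ext x; ring
      have e4 : (∑ x ∈ Finset.univ.filter (· ∈ Ω), π x * s x) ≤ ∑ x, π x * s x := by
        apply Finset.sum_le_sum_of_subset_of_nonneg (Finset.filter_subset _ _)
        intro x _ _
        exact mul_nonneg (hπ x) (hc3 x)
      linarith
    have hγ : M - c ≤ γ := by
      have hθp : c * pΩ = θ := div_mul_cancel₀ _ hpos.ne'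
      nlinarith
    rw [hv]; gcongr
  exact le_antisymm (csInf_le ⟨v, hlb⟩ hmem) (le_csInf ⟨v, hmem⟩ hlb)

/-- the right derivative of ℓ(r,·) at θ = 0 equals
-((1-α) π_{μ*,ν}(Ω(r)))⁻¹, and in fact ℓ(r,δ) is affine in δ near 0. -/
theorem ell_right_derivative_at_zero
    {X A : Type*} [Fintype X] [Nonempty X] [Fintype A] [Nonempty A] [DecidableEq X] {K : ℕ}
    (g : X → A → ℝ) (P : A → X → X → ℝ) (α : ℝ)
    (hα0 : 0 < α) (hα1 : α < 1)
    (hP0 : ∀ a x x', 0 ≤ P a x x') (hP1 : ∀ a x, ∑ x', P a x x' = 1)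
    (Jstar : X → ℝ) (hJstar : bellmanT g P α Jstar = Jstar)
    (μs : X → A) (hμs : polT g P α μs Jstar = bellmanT g P α Jstar)
    (ν : X → ℝ) (hν0 : ∀ x, 0 ≤ ν x) (hν1 : ∑ x, ν x = 1)
    (Φ : X → Fin K → ℝ) (r : Fin K → ℝ)
    -- Ω(r) = argmax_x (Φr(x) - TΦr(x)), and its π_{μ*,ν}-probability:
    (pOmega : ℝ)
    (hpOmega : pOmega = ∑ x, Set.indicator
      {y | ∀ y', phiR Φ r y' - bellmanT g P α (phiR Φ r) y' ≤
                 phiR Φ r y - bellmanT g P α (phiR Φ r) y}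
      (piDist P α μs ν) x)
    (hpos : 0 < pOmega) :
    HasDerivWithinAt (fun θ => ellVal g P α (piDist P α μs ν) Φ r θ)
      (-((1 - α) * pOmega)⁻¹) (Set.Ici 0) 0 ∧
    ∃ δ₀ > 0, ∀ δ : ℝ, 0 ≤ δ → δ ≤ δ₀ →
      ellVal g P α (piDist P α μs ν) Φ r δ =
        ellVal g P α (piDist P α μs ν) Φ r 0 - δ / ((1 - α) * pOmega) := by
  classical
  set F : X → ℝ := fun x => phiR Φ r x - bellmanT g P α (phiR Φ r) x with hF
  set π : X → ℝ := piDist P α μs ν with hπdef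
  have hπ : ∀ x, 0 ≤ π x := by
    intro x
    apply mul_nonneg (by linarith)
    apply Finset.sum_nonneg
    intro x0 _
    exact mul_nonneg (hν0 x0) (delta_nonneg P μs α hα0 hα1 hP0 hP1 x0 x)
  obtain ⟨δ₀, hδ₀pos, hform⟩ := lp_val F π α hα1 hπ pOmega hpOmega hpos
  have h1α : (0:ℝ) < 1 - α := by linarith
  have hval : ∀ δ : ℝ, 0 ≤ δ → δ ≤ δ₀ →
      ellVal g P α π Φ r δ = ellVal g P α π Φ r 0 - δ / ((1 - α) * pOmega) := by
    intro δ h0 h1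
    have e1 : ellVal g P α π Φ r δ
        = ((Finset.univ.sup' Finset.univ_nonempty F) - δ / pOmega) / (1 - α) :=
      hform δ h0 h1
    have e0 : ellVal g P α π Φ r 0
        = ((Finset.univ.sup' Finset.univ_nonempty F) - 0 / pOmega) / (1 - α) :=
      hform 0 le_rfl hδ₀pos.le
    rw [e1, e0]
    field_simp
    ring
  constructor
  · have hL : HasDerivAt (fun θ : ℝ => ellVal g P α π Φ r 0 - θ / ((1 - α) * pOmega))
        (-((1 - α) * pOmega)⁻¹) 0 := by
      have h1 : HasDerivAt (fun θ : ℝ => θ / ((1 - α) * pOmega))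
          (1 / ((1 - α) * pOmega)) 0 := (hasDerivAt_id 0).div_const _
      have := h1.const_sub (ellVal g P α π Φ r 0)
      simpa [one_div] using this
    have hev : (fun θ => ellVal g P α π Φ r θ)
        =ᶠ[nhdsWithin 0 (Set.Ici 0)]
        (fun θ : ℝ => ellVal g P α π Φ r 0 - θ / ((1 - α) * pOmega)) := by
      have h1 : ∀ᶠ θ in nhdsWithin 0 (Set.Ici (0:ℝ)), θ ∈ Set.Ici (0:ℝ) :=
        eventually_mem_nhdsWithin
      have h2 : ∀ᶠ θ in nhdsWithin 0 (Set.Ici (0:ℝ)), θ < δ₀ :=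
        Filter.Eventually.filter_mono nhdsWithin_le_nhds (eventually_lt_nhds hδ₀pos)
      filter_upwards [h1, h2] with θ hθ0 hθδ
      exact hval θ hθ0 hθδ.le
    have hx0 : ellVal g P α π Φ r 0
        = ellVal g P α π Φ r 0 - (0:ℝ) / ((1 - α) * pOmega) := by simp
    exact (hL.hasDerivWithinAt.congr_of_eventuallyEq hev hx0 :)
  · exact ⟨δ₀, hδ₀pos, hval⟩
end
end

section
/- Suppose r_SALP is an optimal solution to the SALP with constraint violation distribution π_{μ*,ν} and violation budget θ ≥ 0, and let r* minimize ||J* − Φr||_∞ over r ∈ ℝ^K. Then ||J* − Φ r_SALP||_{1,ν} ≤ ||J* − Φr*||_∞ + ℓ(r*,θ) + 2θ/(1−α). -/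
open Finset Matrix

noncomputable section

section Aux
variable {X : Type*} [Fintype X] [DecidableEq X]

lemma stoch_pow_nonneg (M : Matrix X X ℝ) (hM0 : ∀ x y, 0 ≤ M x y) :
    ∀ (k : ℕ) (x y : X), 0 ≤ (M ^ k) x y := by
  intro k
  induction k with
  | zero => intro x y; rw [pow_zero, Matrix.one_apply]; split <;> norm_num
  | succ n ih =>
    intro x y
    rw [pow_succ, Matrix.mul_apply]
    exact Finset.sum_nonneg fun z _ => mul_nonneg (ih x z) (hM0 z y)

lemma stoch_pow_rowsum (M : Matrix X X ℝ) (hM1 : ∀ x, ∑ y, M x y = 1) :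
    ∀ (k : ℕ) (x : X), ∑ y, (M ^ k) x y = 1 := by
  intro k
  induction k with
  | zero => intro x; simp [Matrix.one_apply]
  | succ n ih =>
    intro x
    simp only [pow_succ, Matrix.mul_apply]
    rw [Finset.sum_comm]
    simp_rw [← Finset.mul_sum, hM1, mul_one]
    exact ih x

lemma stoch_pow_le_one (M : Matrix X X ℝ) (hM0 : ∀ x y, 0 ≤ M x y)
    (hM1 : ∀ x, ∑ y, M x y = 1) (k : ℕ) (x y : X) : (M ^ k) x y ≤ 1 := by
  calc (M ^ k) x y ≤ ∑ y', (M ^ k) x y' :=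
        Finset.single_le_sum (fun z _ => stoch_pow_nonneg M hM0 k x z) (Finset.mem_univ y)
  _ = 1 := stoch_pow_rowsum M hM1 k x

lemma entry_summable (M : Matrix X X ℝ) (hM0 : ∀ x y, 0 ≤ M x y)
    (hM1 : ∀ x, ∑ y, M x y = 1) {α : ℝ} (hα0 : 0 ≤ α) (hα1 : α < 1) (x y : X) :
    Summable (fun k : ℕ => α ^ k * (M ^ k) x y) := by
  apply Summable.of_nonneg_of_le
    (fun k => mul_nonneg (pow_nonneg hα0 k) (stoch_pow_nonneg M hM0 k x y))
    (fun k => ?_) (summable_geometric_of_lt_one hα0 hα1)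
  calc α ^ k * (M ^ k) x y ≤ α ^ k * 1 :=
        mul_le_mul_of_nonneg_left (stoch_pow_le_one M hM0 hM1 k x y) (pow_nonneg hα0 k)
  _ = α ^ k := mul_one _

end Aux


section Aux2
variable {X : Type*} [Fintype X] [DecidableEq X]

lemma delta_entry (M : Matrix X X ℝ) (hM0 : ∀ x y, 0 ≤ M x y) (hM1 : ∀ x, ∑ y, M x y = 1)
    {α : ℝ} (hα0 : 0 ≤ α) (hα1 : α < 1) (x0 x : X) :
    (∑' k : ℕ, (α • M) ^ k) x0 x = ∑' k : ℕ, α ^ k * (M ^ k) x0 x := by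
  have hpow : ∀ k : ℕ, (α • M) ^ k = α ^ k • M ^ k := fun k => smul_pow α M k
  have hsum : ∀ y z : X, Summable (fun k : ℕ => ((α • M) ^ k) y z) := by
    intro y z
    simp only [hpow, Matrix.smul_apply, smul_eq_mul]
    exact entry_summable M hM0 hM1 hα0 hα1 y z
  have h : Summable (fun k : ℕ => (α • M) ^ k) := by
    rw [show (Summable fun k : ℕ => (α • M) ^ k) =
      Summable (fun k : ℕ => ((α • M) ^ k : X → X → ℝ)) from rfl]
    exact Pi.summable.2 fun y => Pi.summable.2 fun z => hsum y z
  have h1 : Summable (fun k : ℕ => ((α • M) ^ k) x0) := Pi.summable.1 h x0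
  rw [show (∑' k : ℕ, (α • M) ^ k) x0 x = (∑' k : ℕ, ((α • M) ^ k) x0) x from
    congrFun (tsum_apply h) x, tsum_apply h1]
  congr 1
  funext k
  simp [hpow k, Matrix.smul_apply]

lemma inf'_sub_const {A : Type*} [Fintype A] [Nonempty A] (f : A → ℝ) (c : ℝ) :
    (Finset.univ.inf' Finset.univ_nonempty fun a => f a - c) =
      (Finset.univ.inf' Finset.univ_nonempty f) - c := by
  apply le_antisymm
  · obtain ⟨a, _, ha⟩ := Finset.exists_mem_eq_inf' (Finset.univ_nonempty) f
    calc (Finset.univ.inf' Finset.univ_nonempty fun a => f a - c) ≤ f a - c :=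
          Finset.inf'_le _ (Finset.mem_univ a)
    _ = _ := by rw [ha]
  · apply Finset.le_inf'
    intro a _
    have : Finset.univ.inf' Finset.univ_nonempty f ≤ f a :=
      Finset.inf'_le f (Finset.mem_univ a)
    linarith

end Aux2

section Aux3
variable {X : Type*} [Fintype X] [Nonempty X] [DecidableEq X]

lemma key_iter (M : Matrix X X ℝ) (hM0 : ∀ x y, 0 ≤ M x y) (hM1 : ∀ x, ∑ y, M x y = 1)
    {α : ℝ} (hα0 : 0 ≤ α) (hα1 : α < 1)
    (stoch_pow_nonneg : ∀ (k : ℕ) (x y : X), 0 ≤ (M ^ k) x y)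
    (stoch_pow_rowsum : ∀ (k : ℕ) (x : X), ∑ y, (M ^ k) x y = 1)
    (entry_summable : ∀ x y : X, Summable (fun k : ℕ => α ^ k * (M ^ k) x y))
    (pow_le_one' : ∀ (k : ℕ) (x y : X), (M ^ k) x y ≤ 1)
    (e s : X → ℝ) (hs : ∀ x, 0 ≤ s x)
    (h : ∀ x, e x ≤ α * ∑ x', M x x' * e x' + s x) (x : X) :
    e x ≤ ∑ x', (∑' k : ℕ, α ^ k * (M ^ k) x x') * s x' := by
  -- the per-step term
  set t : ℕ → ℝ := fun k => α ^ k * ∑ x', (M ^ k) x x' * s x' with ht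
  have hC : ∃ C, ∀ y, |e y| ≤ C := ⟨Finset.univ.sup' Finset.univ_nonempty fun y => |e y|,
    fun y => Finset.le_sup' (fun y => |e y|) (Finset.mem_univ y)⟩
  obtain ⟨C, hCe⟩ := hC
  have hC0 : 0 ≤ C := le_trans (abs_nonneg _) (hCe x)
  -- iteration bound
  have hiter : ∀ n : ℕ, ∀ y : X, e y ≤
      (∑ k ∈ Finset.range n, α ^ k * ∑ x', (M ^ k) y x' * s x') +
        α ^ n * ∑ x', (M ^ n) y x' * e x' := by
    intro n
    induction n with
    | zero =>
      intro y
      simp [Matrix.one_apply, Finset.sum_ite_eq]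
    | succ n ih =>
      intro y
      have step : ∑ x', (M ^ n) y x' * e x' ≤
          α * ∑ x', ((M ^ (n+1)) y x' * e x') + ∑ x', (M ^ n) y x' * s x' := by
        have h1 : ∀ x', (M ^ n) y x' * e x' ≤
            (M ^ n) y x' * (α * ∑ z, M x' z * e z + s x') := fun x' =>
          mul_le_mul_of_nonneg_left (h x') (stoch_pow_nonneg n y x')
        calc ∑ x', (M ^ n) y x' * e x'
            ≤ ∑ x', (M ^ n) y x' * (α * ∑ z, M x' z * e z + s x') :=
              Finset.sum_le_sum fun x' _ => h1 x'
          _ = α * ∑ x', (M ^ n) y x' * ∑ z, M x' z * e z + ∑ x', (M ^ n) y x' * s x' := by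
              rw [Finset.mul_sum, ← Finset.sum_add_distrib]
              congr 1; funext x'; ring
          _ = α * ∑ z, (M ^ (n+1)) y z * e z + ∑ x', (M ^ n) y x' * s x' := by
              congr 1
              congr 1
              rw [pow_succ]
              simp_rw [Matrix.mul_apply, Finset.sum_mul, Finset.mul_sum]
              rw [Finset.sum_comm]
              apply Finset.sum_congr rfl; intro z _
              apply Finset.sum_congr rfl; intro x' _
              ring
      calc e y ≤ (∑ k ∈ Finset.range n, α ^ k * ∑ x', (M ^ k) y x' * s x') +
            α ^ n * ∑ x', (M ^ n) y x' * e x' := ih y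
        _ ≤ (∑ k ∈ Finset.range n, α ^ k * ∑ x', (M ^ k) y x' * s x') +
            α ^ n * (α * ∑ x', ((M ^ (n+1)) y x' * e x') + ∑ x', (M ^ n) y x' * s x') := by
            have := mul_le_mul_of_nonneg_left step (pow_nonneg hα0 n)
            linarith
        _ = (∑ k ∈ Finset.range (n+1), α ^ k * ∑ x', (M ^ k) y x' * s x') +
            α ^ (n+1) * ∑ x', (M ^ (n+1)) y x' * e x' := by
            rw [Finset.sum_range_succ]; ring
  have hTs : Summable t := by
    apply Summable.of_nonneg_of_le (fun k => ?_) (fun k => ?_)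
      ((summable_geometric_of_lt_one hα0 hα1).mul_right (∑ x', s x'))
    · exact mul_nonneg (pow_nonneg hα0 k)
        (Finset.sum_nonneg fun z _ => mul_nonneg (stoch_pow_nonneg k x z) (hs z))
    · have h2 : ∑ x', (M ^ k) x x' * s x' ≤ ∑ x', s x' :=
        Finset.sum_le_sum fun z _ => by
          have := pow_le_one' k x z
          nlinarith [hs z]
      exact mul_le_mul_of_nonneg_left h2 (pow_nonneg hα0 k)
  have htend : Filter.Tendsto (fun n => ∑ k ∈ Finset.range n, t k) Filter.atTop
      (nhds (∑' k, t k)) := hTs.hasSum.tendsto_sum_nat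
  have hE : Filter.Tendsto (fun n => α ^ n * ∑ x', (M ^ n) x x' * e x') Filter.atTop
      (nhds 0) := by
    apply squeeze_zero_norm (fun n => ?_)
      (by simpa using (tendsto_pow_atTop_nhds_zero_of_lt_one hα0 hα1).const_mul C)
    have habs : |∑ x', (M ^ n) x x' * e x'| ≤ C := by
      calc |∑ x', (M ^ n) x x' * e x'| ≤ ∑ x', |(M ^ n) x x' * e x'| :=
            Finset.abs_sum_le_sum_abs _ _
      _ = ∑ x', (M ^ n) x x' * |e x'| := by
            apply Finset.sum_congr rfl; intro z _
            rw [abs_mul, abs_of_nonneg (stoch_pow_nonneg n x z)]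
      _ ≤ ∑ x', (M ^ n) x x' * C :=
            Finset.sum_le_sum fun z _ =>
              mul_le_mul_of_nonneg_left (hCe z) (stoch_pow_nonneg n x z)
      _ = C := by rw [← Finset.sum_mul, stoch_pow_rowsum n x, one_mul]
    calc ‖α ^ n * ∑ x', (M ^ n) x x' * e x'‖ = α ^ n * |∑ x', (M ^ n) x x' * e x'| := by
          rw [Real.norm_eq_abs, abs_mul, abs_of_nonneg (pow_nonneg hα0 n)]
    _ ≤ α ^ n * C := mul_le_mul_of_nonneg_left habs (pow_nonneg hα0 n)
    _ = C * α ^ n := mul_comm _ _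
  have hlim : Filter.Tendsto
      (fun n => ∑ k ∈ Finset.range n, t k + α ^ n * ∑ x', (M ^ n) x x' * e x')
      Filter.atTop (nhds (∑' k, t k)) := by simpa using htend.add hE
  have hfin : e x ≤ ∑' k, t k :=
    ge_of_tendsto hlim (Filter.Eventually.of_forall fun n => hiter n x)
  have heq : ∑' k, t k = ∑ x', (∑' k : ℕ, α ^ k * (M ^ k) x x') * s x' := by
    calc ∑' k, t k = ∑' k, ∑ x', α ^ k * (M ^ k) x x' * s x' := by
          apply tsum_congr; intro k
          rw [ht]; simp only []
          rw [Finset.mul_sum]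
          apply Finset.sum_congr rfl; intro z _; ring
    _ = ∑ x', ∑' k : ℕ, α ^ k * (M ^ k) x x' * s x' := by
          rw [Summable.tsum_finsetSum]
          intro z _
          exact (entry_summable x z).mul_right (s z)
    _ = ∑ x', (∑' k : ℕ, α ^ k * (M ^ k) x x') * s x' := by
          apply Finset.sum_congr rfl; intro z _
          exact tsum_mul_right
  rw [← heq]; exact hfin

end Aux3

/-- Theorem 1: if r_SALP is optimal for the SALP with violation distribution
π_{μ*,ν} and budget θ, and r* minimizes ‖J* - Φr‖_∞, then
‖J* - Φ r_SALP‖_{1,ν} ≤ ‖J* - Φr*‖_∞ + ℓ(r*,θ) + 2θ/(1-α). -/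
theorem salp_simple_approximation_guarantee
    {X A : Type*} [Fintype X] [Nonempty X] [Fintype A] [Nonempty A] [DecidableEq X] {K : ℕ}
    (g : X → A → ℝ) (P : A → X → X → ℝ) (α : ℝ)
    (hα0 : 0 < α) (hα1 : α < 1)
    (hP0 : ∀ a x x', 0 ≤ P a x x') (hP1 : ∀ a x, ∑ x', P a x x' = 1)
    (Jstar : X → ℝ) (hJstar : bellmanT g P α Jstar = Jstar)
    (μs : X → A) (hμs : polT g P α μs Jstar = bellmanT g P α Jstar)
    (ν : X → ℝ) (hν0 : ∀ x, 0 ≤ ν x) (hν1 : ∑ x, ν x = 1)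
    (Φ : X → Fin K → ℝ)
    (hone : ∃ r1 : Fin K → ℝ, ∀ x, phiR Φ r1 x = 1)
    (θ : ℝ) (hθ : 0 ≤ θ)
    -- (r_SALP, s̄) is an optimal solution of the SALP (3.1):
    (rSALP : Fin K → ℝ) (sbar : X → ℝ)
    (hfeas : (∀ x, phiR Φ rSALP x ≤ bellmanT g P α (phiR Φ rSALP) x + sbar x) ∧
      (∑ x, piDist P α μs ν x * sbar x ≤ θ) ∧ (∀ x, 0 ≤ sbar x))
    (hopt : ∀ (r : Fin K → ℝ) (s : X → ℝ),
      (∀ x, phiR Φ r x ≤ bellmanT g P α (phiR Φ r) x + s x) →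
      (∑ x, piDist P α μs ν x * s x ≤ θ) → (∀ x, 0 ≤ s x) →
      ∑ x, ν x * phiR Φ r x ≤ ∑ x, ν x * phiR Φ rSALP x)
    -- r* minimizes ‖J* - Φr‖_∞:
    (rstar : Fin K → ℝ)
    (hrstar : ∀ r : Fin K → ℝ,
      supNorm (fun x => Jstar x - phiR Φ rstar x) ≤ supNorm (fun x => Jstar x - phiR Φ r x)) :
    wnorm1 ν (fun x => Jstar x - phiR Φ rSALP x) ≤
      supNorm (fun x => Jstar x - phiR Φ rstar x) +
      ellVal g P α (piDist P α μs ν) Φ rstar θ + 2 * θ / (1 - α) := by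
  
  have hα0' : (0:ℝ) ≤ α := le_of_lt hα0
  have h1α : (0:ℝ) < 1 - α := by linarith
  set M : Matrix X X ℝ := polMat P μs with hMdef
  have hM0 : ∀ x y, 0 ≤ M x y := fun x y => hP0 (μs x) x y
  have hM1 : ∀ x, ∑ y, M x y = 1 := fun x => hP1 (μs x) x
  have hpn := stoch_pow_nonneg M hM0
  have hpr := stoch_pow_rowsum M hM1
  have hple := stoch_pow_le_one M hM0 hM1
  have hes := entry_summable M hM0 hM1 hα0' hα1
  set D : X → X → ℝ := fun x0 x => ∑' k : ℕ, α ^ k * (M ^ k) x0 x with hDdef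
  have hDelta : ∀ x0 x, deltaMat P α μs x0 x = D x0 x := fun x0 x =>
    delta_entry M hM0 hM1 hα0' hα1 x0 x
  have hD0 : ∀ x0 x, 0 ≤ D x0 x := fun x0 x =>
    tsum_nonneg fun k => mul_nonneg (pow_nonneg hα0' k) (hpn k x0 x)
  have hpi : ∀ x, piDist P α μs ν x = (1 - α) * ∑ x0, ν x0 * D x0 x := by
    intro x
    simp only [piDist]
    congr 1
    exact Finset.sum_congr rfl fun x0 _ => by rw [hDelta]
  -- value of policy operator at Jstar
  have hJfix : ∀ x, g x (μs x) + α * ∑ x', M x x' * Jstar x' = Jstar x := by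
    intro x
    have := (congrFun hμs x).trans (congrFun hJstar x)
    simpa [polT, hMdef, polMat] using this
  -- Bellman ≤ policy operator
  have hble : ∀ (J : X → ℝ) (x : X),
      bellmanT g P α J x ≤ g x (μs x) + α * ∑ x', M x x' * J x' := by
    intro J x
    exact Finset.inf'_le (fun a => g x a + α * ∑ x', P a x x' * J x') (Finset.mem_univ (μs x))
  -- generic upper bound for feasible solutions
  have hub : ∀ (r : Fin K → ℝ) (s : X → ℝ),
      (∀ x, phiR Φ r x ≤ bellmanT g P α (phiR Φ r) x + s x) → (∀ x, 0 ≤ s x) →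
      ∀ x, phiR Φ r x - Jstar x ≤ ∑ x', D x x' * s x' := by
    intro r s hf hs0 x
    apply key_iter M hM0 hM1 hα0' hα1 hpn hpr hes hple (fun x => phiR Φ r x - Jstar x) s hs0
    intro y
    have h1 : phiR Φ r y ≤ g y (μs y) + α * ∑ x', M y x' * phiR Φ r x' + s y :=
      le_trans (hf y) (by have := hble (phiR Φ r) y; linarith)
    have h2 := hJfix y
    have h3 : ∑ x', M y x' * (phiR Φ r x' - Jstar x') =
        ∑ x', M y x' * phiR Φ r x' - ∑ x', M y x' * Jstar x' := by
      rw [← Finset.sum_sub_distrib]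
      exact Finset.sum_congr rfl fun z _ => by ring
    show phiR Φ r y - Jstar y ≤ α * ∑ x', M y x' * (phiR Φ r x' - Jstar x') + s y
    rw [h3]
    linarith
  -- π-weighted bound
  have hπle : ∀ s : X → ℝ, (∑ x, piDist P α μs ν x * s x ≤ θ) → (∀ x, 0 ≤ s x) →
      ∑ x, ν x * ∑ x', D x x' * s x' ≤ θ / (1 - α) := by
    intro s hπ hs0
    have hswap : ∑ x, ν x * ∑ x', D x x' * s x' = ∑ x', (∑ x, ν x * D x x') * s x' := by
      simp_rw [Finset.mul_sum]
      rw [Finset.sum_comm]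
      apply Finset.sum_congr rfl; intro x' _
      rw [Finset.sum_mul]
      apply Finset.sum_congr rfl; intro x _
      ring
    rw [hswap]
    have heq : ∑ x', (∑ x, ν x * D x x') * s x' =
        (∑ x', piDist P α μs ν x' * s x') / (1 - α) := by
      rw [Finset.sum_div]
      apply Finset.sum_congr rfl; intro x' _
      rw [hpi x']
      field_simp
    rw [heq]
    gcongr
  -- Part 1
  set e : X → ℝ := fun x => Jstar x - phiR Φ rSALP x with hedef
  set c : X → ℝ := fun x => ∑ x', D x x' * sbar x' with hcdef
  have hub1 : ∀ x, phiR Φ rSALP x - Jstar x ≤ c x := hub rSALP sbar hfeas.1 hfeas.2.2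
  have hc0 : ∀ x, 0 ≤ c x := fun x =>
    Finset.sum_nonneg fun z _ => mul_nonneg (hD0 x z) (hfeas.2.2 z)
  have hνc : ∑ x, ν x * c x ≤ θ / (1 - α) := hπle sbar hfeas.2.1 hfeas.2.2
  have habs : ∀ x, |e x| ≤ e x + 2 * c x := by
    intro x
    rcases abs_cases (e x) with ⟨h1, h2⟩ | ⟨h1, h2⟩
    · have := hc0 x; linarith
    · have := hub1 x
      simp only [hedef, hcdef] at *
      linarith
  have hpart1 : wnorm1 ν e ≤ (∑ x, ν x * e x) + 2 * (θ / (1 - α)) := by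
    have h1 : wnorm1 ν e ≤ ∑ x, ν x * (e x + 2 * c x) := by
      apply Finset.sum_le_sum
      intro x _
      exact mul_le_mul_of_nonneg_left (habs x) (hν0 x)
    have h2 : ∑ x, ν x * (e x + 2 * c x) = (∑ x, ν x * e x) + 2 * ∑ x, ν x * c x := by
      rw [Finset.mul_sum, ← Finset.sum_add_distrib]
      apply Finset.sum_congr rfl; intro x _; ring
    rw [h2] at h1
    linarith
  -- Part 2
  set B : ℝ := supNorm (fun x => Jstar x - phiR Φ rstar x) with hBdef
  have hBle : ∀ x, |Jstar x - phiR Φ rstar x| ≤ B := fun x =>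
    Finset.le_sup' (fun x => |Jstar x - phiR Φ rstar x|) (Finset.mem_univ x)
  have hBν : ∑ x, ν x * (Jstar x - phiR Φ rstar x) ≤ B := by
    calc ∑ x, ν x * (Jstar x - phiR Φ rstar x) ≤ ∑ x, ν x * B := by
          apply Finset.sum_le_sum; intro x _
          exact mul_le_mul_of_nonneg_left (le_trans (le_abs_self _) (hBle x)) (hν0 x)
    _ = B := by rw [← Finset.sum_mul, hν1, one_mul]
  obtain ⟨r1, hr1⟩ := hone
  -- ellSet is nonempty
  have hne : (ellSet g P α (piDist P α μs ν) Φ rstar θ).Nonempty := by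
    refine ⟨(Finset.univ.sup' Finset.univ_nonempty
        fun x => phiR Φ rstar x - bellmanT g P α (phiR Φ rstar) x) / (1 - α),
      fun _ => 0, _, rfl, fun x => ?_, by simpa using hθ, fun x => le_refl 0⟩
    rw [zero_add]
    exact Finset.le_sup' (fun x => phiR Φ rstar x - bellmanT g P α (phiR Φ rstar) x)
      (Finset.mem_univ x)
  have hpart2 : (∑ x, ν x * e x) - B ≤ ellVal g P α (piDist P α μs ν) Φ rstar θ := by
    apply le_csInf hne
    rintro v ⟨s, γ, hv, hcon, hπs, hs0⟩
    obtain ⟨cc, hccdef⟩ : ∃ cc : ℝ, cc = γ / (1 - α) := ⟨_, rfl⟩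
    have hcc1 : cc * (1 - α) = γ := by
      rw [hccdef]; exact div_mul_cancel₀ γ (ne_of_gt h1α)
    obtain ⟨r', hr'def⟩ : ∃ r' : Fin K → ℝ, r' = fun i => rstar i - cc * r1 i := ⟨_, rfl⟩
    have hphi' : ∀ x, phiR Φ r' x = phiR Φ rstar x - cc := by
      intro x
      simp only [phiR, hr'def]
      simp only [show ∀ i, Φ x i * (rstar i - cc * r1 i) = Φ x i * rstar i - cc * (Φ x i * r1 i)
        from fun i => by ring]
      rw [Finset.sum_sub_distrib, ← Finset.mul_sum]
      have := hr1 x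
      simp only [phiR] at this
      rw [this, mul_one]
    have hT' : ∀ x, bellmanT g P α (phiR Φ r') x =
        bellmanT g P α (phiR Φ rstar) x - α * cc := by
      intro x
      simp only [bellmanT]
      have hfun : (fun a => g x a + α * ∑ x', P a x x' * phiR Φ r' x') =
          fun a => (g x a + α * ∑ x', P a x x' * phiR Φ rstar x') - α * cc := by
        funext a
        have hsum : ∑ x', P a x x' * phiR Φ r' x' =
            (∑ x', P a x x' * phiR Φ rstar x') - cc := by
          simp_rw [hphi']
          simp only [show ∀ x', P a x x' * (phiR Φ rstar x' - cc) =
            P a x x' * phiR Φ rstar x' - cc * P a x x' from fun x' => by ring]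
          rw [Finset.sum_sub_distrib, ← Finset.mul_sum, hP1 a x, mul_one]
        rw [hsum]; ring
      rw [hfun, inf'_sub_const]
    have hfe : ∀ x, phiR Φ r' x ≤ bellmanT g P α (phiR Φ r') x + s x := by
      intro x
      rw [hphi' x, hT' x]
      have := hcon x
      linarith
    have hopt' := hopt r' s hfe hπs hs0
    have hsum' : ∑ x, ν x * phiR Φ r' x = (∑ x, ν x * phiR Φ rstar x) - cc := by
      simp_rw [hphi']
      simp only [show ∀ x, ν x * (phiR Φ rstar x - cc) = ν x * phiR Φ rstar x - cc * ν x
        from fun x => by ring]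
      rw [Finset.sum_sub_distrib, ← Finset.mul_sum, hν1, mul_one]
    rw [hsum'] at hopt'
    have hsplit : ∑ x, ν x * e x = (∑ x, ν x * Jstar x) - ∑ x, ν x * phiR Φ rSALP x := by
      simp only [hedef]
      rw [← Finset.sum_sub_distrib]
      apply Finset.sum_congr rfl; intro x _; ring
    have hsplit2 : ∑ x, ν x * (Jstar x - phiR Φ rstar x) =
        (∑ x, ν x * Jstar x) - ∑ x, ν x * phiR Φ rstar x := by
      rw [← Finset.sum_sub_distrib]
      apply Finset.sum_congr rfl; intro x _; ring
    rw [hv, ← hccdef]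
    linarith
  have hfinal : 2 * θ / (1 - α) = 2 * (θ / (1 - α)) := by ring
  have : wnorm1 ν (fun x => Jstar x - phiR Φ rSALP x) = wnorm1 ν e := rfl
  rw [this, hfinal]
  linarith
end
end

section
/- Let r* minimize ||J* − Φr||_∞ over r ∈ ℝ^K, let Ω(r*) = argmax_{x∈𝒳} (Φr*(x) − TΦr*(x)), assume π_{μ*,ν}(Ω(r*)) > 0, and define U_SALP(θ) = ||J* − Φr*||_∞ + ℓ(r*,θ) + 2θ/(1−α). Then the right derivative of U_SALP at θ = 0 equals (1/(1−α)) [ 2 − (Σ_{x∈Ω(r*)} π_{μ*,ν}(x))^{−1} ]. -/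
open Finset Matrix

noncomputable section

set_option maxHeartbeats 1000000 in
lemma stoch_pow' {X : Type*} [Fintype X] [DecidableEq X] (Q : Matrix X X ℝ)
    (h0 : ∀ x y, 0 ≤ Q x y) (h1 : ∀ x, ∑ y, Q x y = 1) (k : ℕ) :
    (∀ x y, 0 ≤ (Q ^ k) x y) ∧ (∀ x, ∑ y, (Q ^ k) x y = 1) := by
  induction k with
  | zero =>
    constructor
    · intro x y; simp [Matrix.one_apply]; positivity
    · intro x; simp [Matrix.one_apply]
  | succ n ih =>
    obtain ⟨ih0, ih1⟩ := ih
    constructor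
    · intro x y
      rw [pow_succ, Matrix.mul_apply]
      exact Finset.sum_nonneg fun j _ => mul_nonneg (ih0 x j) (h0 j y)
    · intro x
      simp only [pow_succ, Matrix.mul_apply]
      rw [Finset.sum_comm]
      calc ∑ j, ∑ y, (Q ^ n) x j * Q j y = ∑ j, (Q ^ n) x j * ∑ y, Q j y := by
            simp [Finset.mul_sum]
        _ = 1 := by simp [h1, ih1]

set_option maxHeartbeats 1000000 in
lemma stoch_pow_le_one' {X : Type*} [Fintype X] [DecidableEq X] (Q : Matrix X X ℝ)
    (h0 : ∀ x y, 0 ≤ Q x y) (h1 : ∀ x, ∑ y, Q x y = 1) (k : ℕ) (x y : X) :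
    (Q ^ k) x y ≤ 1 := by
  obtain ⟨p0, p1⟩ := stoch_pow' Q h0 h1 k
  calc (Q ^ k) x y ≤ ∑ y', (Q ^ k) x y' :=
        Finset.single_le_sum (fun i _ => p0 x i) (Finset.mem_univ y)
    _ = 1 := p1 x

set_option maxHeartbeats 1000000 in
lemma piDist_nonneg' {X A : Type*} [Fintype X] [DecidableEq X]
    (P : A → X → X → ℝ) (α : ℝ) (μ : X → A) (ν : X → ℝ)
    (hα0 : 0 < α) (hα1 : α < 1)
    (hP0 : ∀ a x x', 0 ≤ P a x x') (hP1 : ∀ a x, ∑ x', P a x x' = 1)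
    (hν0 : ∀ x, 0 ≤ ν x) (x : X) : 0 ≤ piDist P α μ ν x := by
  set Q := polMat P μ with hQ
  have hQ0 : ∀ x y, 0 ≤ Q x y := fun x y => hP0 _ x y
  have hQ1 : ∀ x, ∑ y, Q x y = 1 := fun x => hP1 _ x
  have hentry : ∀ k x0 x1, ((α • Q) ^ k) x0 x1 = α ^ k * (Q ^ k) x0 x1 := by
    intro k x0 x1
    rw [smul_pow]
    simp [Matrix.smul_apply]
  have hsum : Summable fun k : ℕ => (α • Q) ^ k := by
    refine Pi.summable.mpr fun x0 => Pi.summable.mpr fun x1 => ?_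
    refine Summable.of_nonneg_of_le (fun k => ?_) (fun k => ?_)
      (summable_geometric_of_lt_one hα0.le hα1)
    · rw [hentry]
      exact mul_nonneg (pow_nonneg hα0.le k) ((stoch_pow' Q hQ0 hQ1 k).1 x0 x1)
    · rw [hentry]
      calc α ^ k * (Q ^ k) x0 x1 ≤ α ^ k * 1 :=
            mul_le_mul_of_nonneg_left (stoch_pow_le_one' Q hQ0 hQ1 k x0 x1)
              (pow_nonneg hα0.le k)
        _ = α ^ k := mul_one _
  have hdelta : ∀ x0 x1, 0 ≤ deltaMat P α μ x0 x1 := by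
    intro x0 x1
    have h := Pi.hasSum.mp (Pi.hasSum.mp hsum.hasSum x0) x1
    rw [deltaMat] at *
    rw [← h.tsum_eq]
    apply tsum_nonneg
    intro k; rw [hentry]
    exact mul_nonneg (pow_nonneg hα0.le k) ((stoch_pow' Q hQ0 hQ1 k).1 x0 x1)
  unfold piDist
  apply mul_nonneg (by linarith)
  exact Finset.sum_nonneg fun x0 _ => mul_nonneg (hν0 x0) (hdelta x0 x)


set_option maxHeartbeats 1000000 in
/-- Corollary 1(ii): the right derivative of U_SALP at θ = 0 equals
(1/(1-α)) (2 - (π_{μ*,ν}(Ω(r*)))⁻¹). -/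
theorem U_SALP_right_derivative_at_zero
    {X A : Type*} [Fintype X] [Nonempty X] [Fintype A] [Nonempty A] [DecidableEq X] {K : ℕ}
    (g : X → A → ℝ) (P : A → X → X → ℝ) (α : ℝ)
    (hα0 : 0 < α) (hα1 : α < 1)
    (hP0 : ∀ a x x', 0 ≤ P a x x') (hP1 : ∀ a x, ∑ x', P a x x' = 1)
    (Jstar : X → ℝ) (hJstar : bellmanT g P α Jstar = Jstar)
    (μs : X → A) (hμs : polT g P α μs Jstar = bellmanT g P α Jstar)
    (ν : X → ℝ) (hν0 : ∀ x, 0 ≤ ν x) (hν1 : ∑ x, ν x = 1)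
    (Φ : X → Fin K → ℝ)
    (rstar : Fin K → ℝ)
    (hrstar : ∀ r : Fin K → ℝ,
      supNorm (fun x => Jstar x - phiR Φ rstar x) ≤ supNorm (fun x => Jstar x - phiR Φ r x))
    (pOmega : ℝ)
    (hpOmega : pOmega = ∑ x, Set.indicator
      {y | ∀ y', phiR Φ rstar y' - bellmanT g P α (phiR Φ rstar) y' ≤
                 phiR Φ rstar y - bellmanT g P α (phiR Φ rstar) y}
      (piDist P α μs ν) x)
    (hpos : 0 < pOmega)
    (U : ℝ → ℝ)
    (hU : ∀ θ, U θ = supNorm (fun x => Jstar x - phiR Φ rstar x) +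
      ellVal g P α (piDist P α μs ν) Φ rstar θ + 2 * θ / (1 - α)) :
    HasDerivWithinAt U ((1 / (1 - α)) * (2 - pOmega⁻¹)) (Set.Ici 0) 0 := by
  classical
  have h1α : (0:ℝ) < 1 - α := by linarith
  set π : X → ℝ := piDist P α μs ν with hπ
  have hπ0 : ∀ x, 0 ≤ π x := fun x => piDist_nonneg' P α μs ν hα0 hα1 hP0 hP1 hν0 x
  set d : X → ℝ := fun x => phiR Φ rstar x - bellmanT g P α (phiR Φ rstar) x with hddef
  have hdef : ∀ x, phiR Φ rstar x - bellmanT g P α (phiR Φ rstar) x = d x := fun _ => rfl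
  set M : ℝ := Finset.univ.sup' Finset.univ_nonempty d with hM
  have hdM : ∀ x, d x ≤ M := fun x => Finset.le_sup' d (Finset.mem_univ x)
  have hw0 : pOmega ≠ 0 := ne_of_gt hpos
  -- pOmega as a sum of ite
  have hpO : pOmega = ∑ x, (if d x = M then π x else 0) := by
    rw [hpOmega]
    refine Finset.sum_congr rfl fun x _ => ?_
    rw [Set.indicator_apply]
    by_cases h : d x = M
    · rw [if_pos h, if_pos]
      intro y'
      simp only [hdef]
      exact (hdM y').trans h.ge
    · rw [if_neg h, if_neg]
      intro hc
      simp only [Set.mem_setOf_eq, hdef] at hc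
      exact h (le_antisymm (hdM x) (Finset.sup'_le _ _ fun y _ => hc y))
  -- the margin ε
  set hfun : X → ℝ := fun x => if d x = M then 1 else M - d x with hhfun
  have hhpos : ∀ x, 0 < hfun x := by
    intro x
    by_cases h : d x = M
    · simp [hhfun, h]
    · simp only [hhfun, if_neg h]
      exact sub_pos.mpr (lt_of_le_of_ne (hdM x) h)
  set m : ℝ := min 1 (Finset.univ.inf' Finset.univ_nonempty hfun) with hm
  have hmpos : 0 < m :=
    lt_min one_pos ((Finset.lt_inf'_iff _).mpr fun x _ => hhpos x)
  set ε : ℝ := pOmega * m with hε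
  have hεpos : 0 < ε := mul_pos hpos hmpos
  -- explicit value of the LP for 0 ≤ θ ≤ ε
  have hell : ∀ θ : ℝ, 0 ≤ θ → θ ≤ ε → ellVal g P α π Φ rstar θ = (M - θ / pOmega) / (1 - α) := by
    intro θ hθ0 hθε
    refine IsLeast.csInf_eq ⟨?_, ?_⟩
    · -- membership
      refine ⟨fun x => if d x = M then θ / pOmega else 0, M - θ / pOmega, rfl, ?_, ?_, ?_⟩
      · intro x
        simp only [hdef]
        by_cases h : d x = M
        · rw [if_pos h, h]; ring_nf; exact le_refl _
        · rw [if_neg h]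
          have hle : θ / pOmega ≤ M - d x := by
            rw [div_le_iff₀ hpos]
            calc θ ≤ pOmega * m := hθε
              _ ≤ pOmega * hfun x := by
                  refine mul_le_mul_of_nonneg_left ((min_le_right _ _).trans ?_) hpos.le
                  exact Finset.inf'_le _ (Finset.mem_univ x)
              _ = pOmega * (M - d x) := by rw [hhfun]; simp [h]
              _ = (M - d x) * pOmega := mul_comm _ _
          have := hdM x
          linarith
      · have hsum : ∑ x, π x * (if d x = M then θ / pOmega else 0)
            = pOmega * (θ / pOmega) := by
          rw [hpO, Finset.sum_mul]
          refine Finset.sum_congr rfl fun x _ => ?_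
          by_cases h : d x = M <;> simp [h]
        rw [hsum, mul_comm, div_mul_cancel₀ θ hw0]
      · intro x
        by_cases h : d x = M <;> simp [h]
        positivity
    · -- lower bound
      rintro v ⟨s, γ, rfl, hfeas, hsum, hs0⟩
      have hγ : M - θ / pOmega ≤ γ := by
        by_contra hc
        push_neg at hc
        have key : ∀ x, (if d x = M then π x else 0) * (M - γ) ≤ π x * s x := by
          intro x
          by_cases h : d x = M
          · rw [if_pos h]
            have hfx := hfeas x
            simp only [hdef, h] at hfx
            exact mul_le_mul_of_nonneg_left (by linarith) (hπ0 x)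
          · rw [if_neg h, zero_mul]
            exact mul_nonneg (hπ0 x) (hs0 x)
        have h3 : pOmega * (M - γ) ≤ θ := by
          calc pOmega * (M - γ) = ∑ x, (if d x = M then π x else 0) * (M - γ) := by
                rw [hpO, Finset.sum_mul]
            _ ≤ ∑ x, π x * s x := Finset.sum_le_sum fun x _ => key x
            _ ≤ θ := hsum
        have h4 : θ < pOmega * (M - γ) := by
          have hlt : θ / pOmega < M - γ := by linarith
          calc θ = pOmega * (θ / pOmega) := by rw [mul_comm, div_mul_cancel₀ θ hw0]
            _ < pOmega * (M - γ) := by exact mul_lt_mul_of_pos_left hlt hpos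
        linarith
      gcongr
  -- the derivative
  set c : ℝ := (1 / (1 - α)) * (2 - pOmega⁻¹) with hc
  have key : ∀ θ ∈ Set.Ico (0:ℝ) ε, U θ = U 0 + c * θ := by
    intro θ hθ
    rw [hU θ, hU 0, hell θ hθ.1 hθ.2.le, hell 0 le_rfl hεpos.le, hc]
    have h1 : (1:ℝ) - α ≠ 0 := ne_of_gt h1α
    field_simp
    ring
  have hlin : HasDerivWithinAt (fun θ : ℝ => U 0 + c * θ) c (Set.Ici 0) 0 := by
    have h : HasDerivAt (fun θ : ℝ => U 0 + c * θ) c 0 := by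
      simpa using ((hasDerivAt_id (0:ℝ)).const_mul c).const_add (U 0)
    exact h.hasDerivWithinAt
  have hmem : Set.Ico (0:ℝ) ε ∈ nhdsWithin 0 (Set.Ici 0) :=
    Ico_mem_nhdsGE hεpos
  have heq : U =ᶠ[nhdsWithin 0 (Set.Ici 0)] fun θ => U 0 + c * θ :=
    Filter.eventuallyEq_of_mem hmem key
  exact hlin.congr_of_eventuallyEq heq (by ring)
end
end

section
/- If r_ALP is an optimal solution to the approximate linear program (maximize ν^⊤Φr subject to Φr ≤ TΦr), then ||J* − Φ r_ALP||_{1,ν} ≤ (2/(1−α)) · min_{r∈ℝ^K} ||J* − Φr||_∞. -/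
open Finset Matrix

noncomputable section

private lemma bellmanT_mono' {X A : Type*} [Fintype X] [Fintype A] [Nonempty A]
    (g : X → A → ℝ) (P : A → X → X → ℝ) (α : ℝ)
    (hα0 : 0 ≤ α) (hP0 : ∀ a x x', 0 ≤ P a x x')
    (J J' : X → ℝ) (h : ∀ x, J x ≤ J' x) (x : X) :
    bellmanT g P α J x ≤ bellmanT g P α J' x := by
  unfold bellmanT
  apply Finset.le_inf'
  intro a _
  refine le_trans (Finset.inf'_le _ (Finset.mem_univ a)) ?_
  have hs : ∑ x', P a x x' * J x' ≤ ∑ x', P a x x' * J' x' :=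
    Finset.sum_le_sum fun x' _ => mul_le_mul_of_nonneg_left (h x') (hP0 a x x')
  have := mul_le_mul_of_nonneg_left hs hα0
  linarith

private lemma bellmanT_shift' {X A : Type*} [Fintype X] [Fintype A] [Nonempty A]
    (g : X → A → ℝ) (P : A → X → X → ℝ) (α : ℝ)
    (hP1 : ∀ a x, ∑ x', P a x x' = 1) (J : X → ℝ) (c : ℝ) (x : X) :
    bellmanT g P α (fun y => J y + c) x = bellmanT g P α J x + α * c := by
  unfold bellmanT
  have h1 : ∀ a : A, g x a + α * ∑ x', P a x x' * (J x' + c)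
      = (g x a + α * ∑ x', P a x x' * J x') + α * c := by
    intro a
    have hsum : ∑ x', P a x x' * (J x' + c) = (∑ x', P a x x' * J x') + c := by
      simp [mul_add, Finset.sum_add_distrib, ← Finset.sum_mul, hP1 a x]
    rw [hsum]; ring
  simp only [h1]
  apply le_antisymm
  · obtain ⟨a, ha, hEq⟩ := Finset.exists_mem_eq_inf' (Finset.univ_nonempty)
      (fun a => g x a + α * ∑ x', P a x x' * J x')
    calc Finset.univ.inf' Finset.univ_nonempty
          (fun a => (g x a + α * ∑ x', P a x x' * J x') + α * c)
        ≤ (g x a + α * ∑ x', P a x x' * J x') + α * c :=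
          Finset.inf'_le _ ha
      _ = _ := by rw [hEq]
  · apply Finset.le_inf'
    intro a ha
    have := Finset.inf'_le (fun a => g x a + α * ∑ x', P a x x' * J x') ha
    linarith

/-- de Farias-Van Roy bound: if r_ALP is optimal for the ALP then
‖J* - Φ r_ALP‖_{1,ν} ≤ (2/(1-α)) min_r ‖J* - Φr‖_∞. -/
theorem alp_approximation_guarantee
    {X A : Type*} [Fintype X] [Nonempty X] [Fintype A] [Nonempty A] {K : ℕ}
    (g : X → A → ℝ) (P : A → X → X → ℝ) (α : ℝ)
    (hα0 : 0 < α) (hα1 : α < 1)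
    (hP0 : ∀ a x x', 0 ≤ P a x x') (hP1 : ∀ a x, ∑ x', P a x x' = 1)
    (Jstar : X → ℝ) (hJstar : bellmanT g P α Jstar = Jstar)
    (ν : X → ℝ) (hν0 : ∀ x, 0 ≤ ν x) (hν1 : ∑ x, ν x = 1)
    (Φ : X → Fin K → ℝ)
    (hone : ∃ r1 : Fin K → ℝ, ∀ x, phiR Φ r1 x = 1)
    (rALP : Fin K → ℝ)
    (hfeas : ∀ x, phiR Φ rALP x ≤ bellmanT g P α (phiR Φ rALP) x)
    (hopt : ∀ r : Fin K → ℝ, (∀ x, phiR Φ r x ≤ bellmanT g P α (phiR Φ r) x) →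
      ∑ x, ν x * phiR Φ r x ≤ ∑ x, ν x * phiR Φ rALP x) :
    wnorm1 ν (fun x => Jstar x - phiR Φ rALP x) ≤
      (2 / (1 - α)) * ⨅ r : Fin K → ℝ, supNorm (fun x => Jstar x - phiR Φ r x) := by
  obtain ⟨r1, hr1⟩ := hone
  have h1α : (0:ℝ) < 1 - α := by linarith
  -- feasible functions are below Jstar
  have hle : ∀ J : X → ℝ, (∀ x, J x ≤ bellmanT g P α J x) → ∀ x, J x ≤ Jstar x := by
    intro J hJ
    set d := Finset.univ.sup' Finset.univ_nonempty (fun x => J x - Jstar x) with hd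
    have hxd : ∀ x, J x ≤ Jstar x + d := by
      intro x
      have := Finset.le_sup' (fun x => J x - Jstar x) (Finset.mem_univ x)
      simpa [hd] using by linarith [this]
    have hTd : ∀ x, J x - Jstar x ≤ α * d := by
      intro x
      have h2 := bellmanT_mono' g P α hα0.le hP0 J (fun y => Jstar y + d) hxd x
      have h3 := bellmanT_shift' g P α hP1 Jstar d x
      have h4 : bellmanT g P α Jstar x = Jstar x := congrFun hJstar x
      have h5 := hJ x
      rw [h3, h4] at h2
      linarith
    have hdd : d ≤ α * d := Finset.sup'_le _ _ (fun x _ => hTd x)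
    have hd0 : d ≤ 0 := by nlinarith
    intro x
    have := Finset.le_sup' (fun x => J x - Jstar x) (Finset.mem_univ x)
    rw [← hd] at this
    linarith
  have hALPle : ∀ x, phiR Φ rALP x ≤ Jstar x := hle _ hfeas
  -- the key per-r bound
  set W := wnorm1 ν (fun x => Jstar x - phiR Φ rALP x) with hW
  have hWeq : W = (∑ x, ν x * Jstar x) - ∑ x, ν x * phiR Φ rALP x := by
    rw [hW]
    unfold wnorm1
    rw [← Finset.sum_sub_distrib]
    refine Finset.sum_congr rfl fun x _ => ?_
    rw [abs_of_nonneg (show (0:ℝ) ≤ Jstar x - phiR Φ rALP x by linarith [hALPle x])]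
    ring
  have key : ∀ r : Fin K → ℝ,
      W * (1 - α) ≤ 2 * supNorm (fun x => Jstar x - phiR Φ r x) := by
    intro r
    set ε := supNorm (fun x => Jstar x - phiR Φ r x) with hε
    have habs : ∀ x, |Jstar x - phiR Φ r x| ≤ ε := by
      intro x
      exact Finset.le_sup' (fun x => |Jstar x - phiR Φ r x|) (Finset.mem_univ x)
    have hε0 : 0 ≤ ε :=
      le_trans (abs_nonneg _) (habs (Classical.arbitrary X))
    set k := (1 + α) * ε / (1 - α) with hkdef
    have hkε : k * (1 - α) = (1 + α) * ε := by
      rw [hkdef, div_mul_cancel₀ _ h1α.ne']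
    have hk0 : 0 ≤ k := by positivity
    set rt := fun i => r i - k * r1 i with hrt
    have hlin : ∀ x, phiR Φ rt x = phiR Φ r x - k := by
      intro x
      have hsplit : ∑ i, Φ x i * (r i - k * r1 i)
          = (∑ i, Φ x i * r i) - k * ∑ i, Φ x i * r1 i := by
        rw [Finset.mul_sum, ← Finset.sum_sub_distrib]
        exact Finset.sum_congr rfl fun i _ => by ring
      have h1 : phiR Φ r1 x = 1 := hr1 x
      unfold phiR at h1 ⊢
      rw [hrt]
      simp only at hsplit ⊢
      rw [hsplit, h1, mul_one]
    have hfun : phiR Φ rt = fun y => phiR Φ r y + (-k) := by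
      funext y; rw [hlin y]; ring
    -- feasibility of rt
    have hrtfeas : ∀ x, phiR Φ rt x ≤ bellmanT g P α (phiR Φ rt) x := by
      intro x
      rw [hfun]
      rw [bellmanT_shift' g P α hP1 (phiR Φ r) (-k) x]
      -- Jstar ≤ Φr + ε pointwise, so Jstar = T Jstar ≤ T(Φr) + αε
      have hup : ∀ y, Jstar y ≤ phiR Φ r y + ε := by
        intro y
        have := habs y
        have := abs_le.mp this
        linarith [this.2]
      have h2 := bellmanT_mono' g P α hα0.le hP0 Jstar (fun y => phiR Φ r y + ε) hup x
      have h3 := bellmanT_shift' g P α hP1 (phiR Φ r) ε x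
      have h4 : bellmanT g P α Jstar x = Jstar x := congrFun hJstar x
      rw [h3, h4] at h2
      have h5 : phiR Φ r x ≤ Jstar x + ε := by
        have := abs_le.mp (habs x); linarith [this.1]
      show phiR Φ r x + -k ≤ bellmanT g P α (phiR Φ r) x + α * -k
      linarith
    have hsum_rt := hopt rt hrtfeas
    have hsum_rt' : ∑ x, ν x * phiR Φ rt x = (∑ x, ν x * phiR Φ r x) - k := by
      simp only [hlin, mul_sub]
      rw [Finset.sum_sub_distrib, ← Finset.sum_mul, hν1, one_mul]
    rw [hsum_rt'] at hsum_rt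
    have hsumε : (∑ x, ν x * Jstar x) - (∑ x, ν x * phiR Φ r x) ≤ ε := by
      have : ∑ x, ν x * (Jstar x - phiR Φ r x) ≤ ∑ x, ν x * ε := by
        refine Finset.sum_le_sum fun x _ => ?_
        refine mul_le_mul_of_nonneg_left ?_ (hν0 x)
        have := abs_le.mp (habs x); linarith [this.2]
      rw [← Finset.sum_mul, hν1, one_mul] at this
      calc (∑ x, ν x * Jstar x) - (∑ x, ν x * phiR Φ r x)
          = ∑ x, ν x * (Jstar x - phiR Φ r x) := by
            rw [← Finset.sum_sub_distrib]
            exact Finset.sum_congr rfl fun x _ => by ring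
        _ ≤ ε := this
    have hWbound : W ≤ ε + k := by
      rw [hWeq]; linarith
    nlinarith [hkε, hWbound]
  -- pass to the infimum
  have hW0 : 0 ≤ W := by
    rw [hW]; unfold wnorm1
    exact Finset.sum_nonneg fun x _ => mul_nonneg (hν0 x) (abs_nonneg _)
  have hbdd : ∀ r : Fin K → ℝ, W * (1 - α) / 2 ≤ supNorm (fun x => Jstar x - phiR Φ r x) := by
    intro r; linarith [key r]
  have hinf : W * (1 - α) / 2 ≤ ⨅ r : Fin K → ℝ, supNorm (fun x => Jstar x - phiR Φ r x) :=
    le_ciInf hbdd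
  have h2α : (0:ℝ) < 2 / (1 - α) := by positivity
  calc W = (2 / (1 - α)) * (W * (1 - α) / 2) := by field_simp
    _ ≤ (2 / (1 - α)) * ⨅ r : Fin K → ℝ, supNorm (fun x => Jstar x - phiR Φ r x) :=
        mul_le_mul_of_nonneg_left hinf h2α.le
end
end

section
/- For any J ∈ ℝ^𝒳 and any initial distribution η on 𝒳, the performance loss of the greedy policy μ_J satisfies ||J_{μ_J} − J*||_{1,η} ≤ (1/(1−α)) ( ν(η,J)^⊤(J* − J) + (2/(1−α)) π_{μ*,ν(η,J)}^⊤ (J − TJ)^+ ), where (J − TJ)^+ denotes the componentwise positive part. -/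
open Finset Matrix

noncomputable section

section aux
variable {X : Type*} [Fintype X] [DecidableEq X]

lemma pow_entry_nonneg_s13 (M : Matrix X X ℝ) (hM0 : ∀ x x', 0 ≤ M x x') :
    ∀ (k : ℕ) (x x' : X), 0 ≤ (M ^ k) x x' := by
  intro k
  induction k with
  | zero =>
      intro x x'
      rw [pow_zero, Matrix.one_apply]
      split <;> norm_num
  | succ k ih =>
      intro x x'
      rw [pow_succ, Matrix.mul_apply]
      exact Finset.sum_nonneg fun y _ => mul_nonneg (ih x y) (hM0 y x')

lemma pow_row_sum_s13 (M : Matrix X X ℝ) (hM1 : ∀ x, ∑ x', M x x' = 1) :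
    ∀ (k : ℕ) (x : X), ∑ x', (M ^ k) x x' = 1 := by
  intro k
  induction k with
  | zero => intro x; simp [Matrix.one_apply]
  | succ k ih =>
      intro x
      simp only [pow_succ, Matrix.mul_apply]
      rw [Finset.sum_comm]
      simp_rw [← Finset.mul_sum, hM1, mul_one]
      exact ih x

lemma pow_entry_le_one (M : Matrix X X ℝ) (hM0 : ∀ x x', 0 ≤ M x x')
    (hM1 : ∀ x, ∑ x', M x x' = 1) (k : ℕ) (x x' : X) : (M ^ k) x x' ≤ 1 := by
  calc (M ^ k) x x' ≤ ∑ y, (M ^ k) x y :=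
        Finset.single_le_sum (fun y _ => pow_entry_nonneg_s13 M hM0 k x y) (Finset.mem_univ x')
    _ = 1 := pow_row_sum_s13 M hM1 k x

lemma summable_entry (M : Matrix X X ℝ) (hM0 : ∀ x x', 0 ≤ M x x')
    (hM1 : ∀ x, ∑ x', M x x' = 1) {α : ℝ} (hα0 : 0 ≤ α) (hα1 : α < 1) (x x' : X) :
    Summable (fun k : ℕ => α ^ k * (M ^ k) x x') := by
  refine Summable.of_nonneg_of_le
    (fun k => mul_nonneg (pow_nonneg hα0 k) (pow_entry_nonneg_s13 M hM0 k x x'))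
    (fun k => ?_) (summable_geometric_of_lt_one hα0 hα1)
  exact mul_le_of_le_one_right (pow_nonneg hα0 k) (pow_entry_le_one M hM0 hM1 k x x')

lemma summable_matrix (M : Matrix X X ℝ) (hM0 : ∀ x x', 0 ≤ M x x')
    (hM1 : ∀ x, ∑ x', M x x' = 1) {α : ℝ} (hα0 : 0 ≤ α) (hα1 : α < 1) :
    Summable (fun k : ℕ => (α • M) ^ k) := by
  apply Pi.summable.mpr; intro x
  apply Pi.summable.mpr; intro x'
  refine (summable_entry M hM0 hM1 hα0 hα1 x x').congr fun k => ?_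
  rw [smul_pow]
  simp [smul_eq_mul]

variable {A : Type*} {P : A → X → X → ℝ} {μ : X → A} {α : ℝ}
variable (hP0 : ∀ a x x', 0 ≤ P a x x') (hP1 : ∀ a x, ∑ x', P a x x' = 1)
variable (hα0 : 0 < α) (hα1 : α < 1)

include hP0 hP1 hα0 hα1

set_option linter.unusedSectionVars false in
lemma polMat_nonneg' : ∀ x x' : X, 0 ≤ polMat P μ x x' := fun x x' => hP0 _ x x'
set_option linter.unusedSectionVars false in
lemma polMat_rowsum' : ∀ x : X, ∑ x', polMat P μ x x' = 1 := fun x => hP1 _ x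

lemma deltaMat_apply (x x' : X) :
    deltaMat P α μ x x' = ∑' k : ℕ, α ^ k * ((polMat P μ) ^ k) x x' := by
  have hs := summable_matrix (polMat P μ) ((fun x x' => hP0 (μ x) x x')) ((fun x => hP1 (μ x) x)) hα0.le hα1
  unfold deltaMat
  erw [tsum_apply hs, tsum_apply (Pi.summable.mp hs x)]
  refine tsum_congr fun k => ?_
  rw [smul_pow]
  simp [smul_eq_mul]

lemma deltaMat_nonneg (x x' : X) : 0 ≤ deltaMat P α μ x x' := by
  rw [deltaMat_apply hP0 hP1 hα0 hα1]
  exact tsum_nonneg fun k => mul_nonneg (pow_nonneg hα0.le k)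
    (pow_entry_nonneg_s13 _ ((fun x x' => hP0 (μ x) x x')) k x x')

lemma deltaMat_rec_left (x x' : X) :
    deltaMat P α μ x x' = (if x = x' then 1 else 0) +
      α * ∑ y, polMat P μ x y * deltaMat P α μ y x' := by
  have hM0 : ∀ x x' : X, 0 ≤ polMat P μ x x' := fun x x' => hP0 _ x x'
  have hM1 : ∀ x : X, ∑ x', polMat P μ x x' = 1 := fun x => hP1 _ x
  set M := polMat P μ with hM
  have hsum : ∀ y z : X, Summable (fun k : ℕ => α ^ k * (M ^ k) y z) :=
    fun y z => summable_entry M hM0 hM1 hα0.le hα1 y z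
  rw [deltaMat_apply hP0 hP1 hα0 hα1, Summable.tsum_eq_zero_add (hsum x x')]
  have h0 : α ^ 0 * (M ^ 0) x x' = (if x = x' then 1 else 0) := by
    simp [Matrix.one_apply]
  rw [h0]
  congr 1
  have hterm : ∀ k : ℕ, α ^ (k + 1) * (M ^ (k + 1)) x x' =
      ∑ y, M x y * (α * (α ^ k * (M ^ k) y x')) := by
    intro k
    rw [pow_succ' M k, Matrix.mul_apply, Finset.mul_sum]
    refine Finset.sum_congr rfl fun y _ => ?_
    ring
  rw [tsum_congr hterm, Summable.tsum_finsetSum (fun y _ => ((hsum y x').mul_left (M x y * α)).congr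
    (fun k => by ring))]
  rw [Finset.mul_sum]
  refine Finset.sum_congr rfl fun y _ => ?_
  rw [tsum_congr (fun k => show M x y * (α * (α ^ k * (M ^ k) y x')) =
      (M x y * α) * (α ^ k * (M ^ k) y x') by ring), tsum_mul_left]
  rw [deltaMat_apply hP0 hP1 hα0 hα1]
  ring

lemma deltaMat_rec_right (x x' : X) :
    deltaMat P α μ x x' = (if x = x' then 1 else 0) +
      α * ∑ y, deltaMat P α μ x y * polMat P μ y x' := by
  have hM0 : ∀ x x' : X, 0 ≤ polMat P μ x x' := fun x x' => hP0 _ x x'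
  have hM1 : ∀ x : X, ∑ x', polMat P μ x x' = 1 := fun x => hP1 _ x
  set M := polMat P μ with hM
  have hsum : ∀ y z : X, Summable (fun k : ℕ => α ^ k * (M ^ k) y z) :=
    fun y z => summable_entry M hM0 hM1 hα0.le hα1 y z
  rw [deltaMat_apply hP0 hP1 hα0 hα1, Summable.tsum_eq_zero_add (hsum x x')]
  have h0 : α ^ 0 * (M ^ 0) x x' = (if x = x' then 1 else 0) := by
    simp [Matrix.one_apply]
  rw [h0]
  congr 1
  have hterm : ∀ k : ℕ, α ^ (k + 1) * (M ^ (k + 1)) x x' =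
      ∑ y, (α ^ k * (M ^ k) x y) * (α * M y x') := by
    intro k
    rw [pow_succ M k, Matrix.mul_apply, Finset.mul_sum]
    refine Finset.sum_congr rfl fun y _ => ?_
    ring
  rw [tsum_congr hterm, Summable.tsum_finsetSum (fun y _ => ((hsum x y).mul_right (α * M y x')))]
  rw [Finset.mul_sum]
  refine Finset.sum_congr rfl fun y _ => ?_
  rw [tsum_mul_right, deltaMat_apply hP0 hP1 hα0 hα1]
  ring

end aux

section vec
variable {X A : Type*} [Fintype X] [DecidableEq X]
variable {P : A → X → X → ℝ} {μ : X → A} {α : ℝ}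
variable (hP0 : ∀ a x x', 0 ≤ P a x x') (hP1 : ∀ a x, ∑ x', P a x x' = 1)
variable (hα0 : 0 < α) (hα1 : α < 1)

include hP0 hP1 hα0 hα1

lemma delta_vec_left (v : X → ℝ) (x : X) :
    ∑ y, deltaMat P α μ x y * v y
      = v x + α * ∑ z, polMat P μ x z * (∑ y, deltaMat P α μ z y * v y) := by
  have h1 : ∀ y, deltaMat P α μ x y * v y
      = (if x = y then v y else 0)
        + α * ∑ z, polMat P μ x z * (deltaMat P α μ z y * v y) := by
    intro y
    rw [deltaMat_rec_left hP0 hP1 hα0 hα1 x y, add_mul, mul_assoc α _ (v y),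
      Finset.sum_mul]
    simp [ite_mul, mul_assoc]
  calc ∑ y, deltaMat P α μ x y * v y
      = ∑ y, ((if x = y then v y else 0)
          + α * ∑ z, polMat P μ x z * (deltaMat P α μ z y * v y)) :=
        Finset.sum_congr rfl fun y _ => h1 y
    _ = v x + α * ∑ z, polMat P μ x z * (∑ y, deltaMat P α μ z y * v y) := by
        rw [Finset.sum_add_distrib]
        congr 1
        · simp
        · rw [← Finset.mul_sum, Finset.sum_comm]
          congr 1
          refine Finset.sum_congr rfl fun z _ => ?_
          rw [Finset.mul_sum]

lemma delta_vec_right (v : X → ℝ) (x : X) :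
    ∑ y, deltaMat P α μ x y * v y
      = v x + α * ∑ z, deltaMat P α μ x z * (∑ y, polMat P μ z y * v y) := by
  have h1 : ∀ y, deltaMat P α μ x y * v y
      = (if x = y then v y else 0)
        + α * ∑ z, deltaMat P α μ x z * (polMat P μ z y * v y) := by
    intro y
    rw [deltaMat_rec_right hP0 hP1 hα0 hα1 x y, add_mul, mul_assoc α _ (v y),
      Finset.sum_mul]
    simp [ite_mul, mul_assoc]
  calc ∑ y, deltaMat P α μ x y * v y
      = ∑ y, ((if x = y then v y else 0)
          + α * ∑ z, deltaMat P α μ x z * (polMat P μ z y * v y)) :=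
        Finset.sum_congr rfl fun y _ => h1 y
    _ = v x + α * ∑ z, deltaMat P α μ x z * (∑ y, polMat P μ z y * v y) := by
        rw [Finset.sum_add_distrib]
        congr 1
        · simp
        · rw [← Finset.mul_sum, Finset.sum_comm]
          congr 1
          refine Finset.sum_congr rfl fun z _ => ?_
          rw [Finset.mul_sum]

lemma Jpol_eq (g : X → A → ℝ) (x : X) :
    Jpol g P α μ x = ∑ y, deltaMat P α μ x y * g y (μ y) := by
  have hsum : ∀ y z : X, Summable (fun k : ℕ => α ^ k * ((polMat P μ) ^ k) y z) :=
    fun y z => summable_entry (polMat P μ) (fun x x' => hP0 (μ x) x x')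
      (fun x => hP1 (μ x) x) hα0.le hα1 y z
  have hterm : ∀ t : ℕ, α ^ t * (((polMat P μ) ^ t) *ᵥ (fun y => g y (μ y))) x
      = ∑ y, (α ^ t * ((polMat P μ) ^ t) x y) * g y (μ y) := by
    intro t
    rw [Matrix.mulVec, dotProduct, Finset.mul_sum]
    exact Finset.sum_congr rfl fun y _ => by ring
  show ∑' t : ℕ, α ^ t * (((polMat P μ) ^ t) *ᵥ (fun y => g y (μ y))) x = _
  rw [tsum_congr hterm, Summable.tsum_finsetSum (fun y _ => (hsum x y).mul_right _)]
  refine Finset.sum_congr rfl fun y _ => ?_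
  rw [tsum_mul_right, deltaMat_apply hP0 hP1 hα0 hα1]

end vec

/-- Theorem 3, performance bound: for any J and initial distribution η,
‖J_{μ_J} - J*‖_{1,η} ≤ (1/(1-α)) (ν(η,J)^⊤(J* - J) + (2/(1-α)) π_{μ*,ν(η,J)}^⊤ (J - TJ)^+),
where ν(η,J)^⊤ = (1-α) η^⊤ Δ_{μ_J}. -/


theorem salp_performance_bound
    {X A : Type*} [Fintype X] [Nonempty X] [Fintype A] [Nonempty A] [DecidableEq X]
    (g : X → A → ℝ) (P : A → X → X → ℝ) (α : ℝ)
    (hα0 : 0 < α) (hα1 : α < 1)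
    (hP0 : ∀ a x x', 0 ≤ P a x x') (hP1 : ∀ a x, ∑ x', P a x x' = 1)
    (Jstar : X → ℝ) (hJstar : bellmanT g P α Jstar = Jstar)
    (μs : X → A) (hμs : polT g P α μs Jstar = bellmanT g P α Jstar)
    (J : X → ℝ) (μJ : X → A) (hμJ : polT g P α μJ J = bellmanT g P α J)
    (η : X → ℝ) (hη0 : ∀ x, 0 ≤ η x) (hη1 : ∑ x, η x = 1) :
    wnorm1 η (fun x => Jpol g P α μJ x - Jstar x) ≤
      (1 / (1 - α)) *
        ((∑ x, piDist P α μJ η x * (Jstar x - J x)) +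
          (2 / (1 - α)) *
            ∑ x, piDist P α μs (piDist P α μJ η) x * max (J x - bellmanT g P α J x) 0) := by
  classical
  -- abbreviations (plain lets via have-style functions)
  set s : X → ℝ := fun x => max (J x - bellmanT g P α J x) 0 with hsdef
  set q : X → ℝ := fun y => ∑ x, η x * deltaMat P α μJ x y with hqdef
  set w : X → ℝ := fun y => polT g P α μJ Jstar y - Jstar y with hwdef
  have hDJ0 : ∀ x y : X, 0 ≤ deltaMat P α μJ x y :=
    fun x y => deltaMat_nonneg hP0 hP1 hα0 hα1 x y
  have hDS0 : ∀ x y : X, 0 ≤ deltaMat P α μs x y :=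
    fun x y => deltaMat_nonneg hP0 hP1 hα0 hα1 x y
  have hq0 : ∀ y, 0 ≤ q y :=
    fun y => Finset.sum_nonneg fun x _ => mul_nonneg (hη0 x) (hDJ0 x y)
  have hs0 : ∀ x, 0 ≤ s x := fun x => le_max_right _ _
  have hsJ : ∀ x, J x - bellmanT g P α J x ≤ s x := fun x => le_max_left _ _
  have hbell_le_pol : ∀ (μ : X → A) (v : X → ℝ) (x : X),
      bellmanT g P α v x ≤ polT g P α μ v x := by
    intro μ v x
    exact Finset.inf'_le _ (Finset.mem_univ (μ x))
  have hJstar' : ∀ y, bellmanT g P α Jstar y = Jstar y := fun y => congrFun hJstar y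
  have hμJ' : ∀ y, polT g P α μJ J y = bellmanT g P α J y := fun y => congrFun hμJ y
  have hμs' : ∀ y, polT g P α μs Jstar y = Jstar y := fun y => by rw [hμs, hJstar]
  have hw0 : ∀ y, 0 ≤ w y := by
    intro y
    have := hbell_le_pol μJ Jstar y
    have h2 := hJstar' y
    simp only [hwdef]
    linarith
  have hpolT_diff : ∀ (μ : X → A) (u v : X → ℝ) (y : X),
      polT g P α μ u y - polT g P α μ v y = α * ∑ z, polMat P μ y z * (u z - v z) := by
    intro μ u v y
    simp only [polT, polMat, Matrix.of_apply, mul_sub, Finset.sum_sub_distrib]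
    ring
  -- vec identities
  have K7J := fun (v : X → ℝ) (x : X) =>
    delta_vec_right hP0 hP1 hα0 hα1 (μ := μJ) v x
  have K7S := fun (v : X → ℝ) (x : X) =>
    delta_vec_right hP0 hP1 hα0 hα1 (μ := μs) v x
  have K6S := fun (v : X → ℝ) (x : X) =>
    delta_vec_left hP0 hP1 hα0 hα1 (μ := μs) v x
  -- J_{μJ} - J* = DJ w
  have hJdiff : ∀ x, Jpol g P α μJ x - Jstar x = ∑ y, deltaMat P α μJ x y * w y := by
    intro x
    have hJp := Jpol_eq hP0 hP1 hα0 hα1 (μ := μJ) g x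
    have hK := K7J Jstar x
    have expand : ∑ y, deltaMat P α μJ x y * w y
        = (∑ y, deltaMat P α μJ x y * g y (μJ y))
          + α * (∑ y, deltaMat P α μJ x y * (∑ z, polMat P μJ y z * Jstar z))
          - ∑ y, deltaMat P α μJ x y * Jstar y := by
      have hterm : ∀ y, deltaMat P α μJ x y * w y
          = deltaMat P α μJ x y * g y (μJ y)
            + α * (deltaMat P α μJ x y * (∑ z, polMat P μJ y z * Jstar z))
            - deltaMat P α μJ x y * Jstar y := by
        intro y
        simp only [hwdef, polT, polMat, Matrix.of_apply]
        ring
      rw [Finset.sum_congr rfl fun y _ => hterm y, Finset.sum_sub_distrib,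
        Finset.sum_add_distrib, ← Finset.mul_sum]
    rw [expand, hJp]
    linarith [hK]
  -- row transform
  have hrow : ∀ v : X → ℝ,
      ∑ x, η x * (∑ y, deltaMat P α μJ x y * v y) = ∑ y, q y * v y := by
    intro v
    simp_rw [Finset.mul_sum]
    rw [Finset.sum_comm]
    refine Finset.sum_congr rfl fun y _ => ?_
    simp only [hqdef]
    rw [Finset.sum_mul]
    exact Finset.sum_congr rfl fun x _ => by ring
  -- R7 row identity
  have R7 : ∀ v : X → ℝ, ∑ y, q y * v y
      = ∑ x, η x * v x + α * ∑ z, q z * (∑ y, polMat P μJ z y * v y) := by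
    intro v
    calc ∑ y, q y * v y = ∑ x, η x * (∑ y, deltaMat P α μJ x y * v y) := (hrow v).symm
      _ = ∑ x, η x * (v x + α * ∑ z, deltaMat P α μJ x z * (∑ y, polMat P μJ z y * v y)) :=
          Finset.sum_congr rfl fun x _ => by rw [K7J v x]
      _ = ∑ x, η x * v x
          + α * ∑ x, η x * (∑ z, deltaMat P α μJ x z * (∑ y, polMat P μJ z y * v y)) := by
          simp only [mul_add, Finset.sum_add_distrib]
          congr 1
          rw [Finset.mul_sum]
          exact Finset.sum_congr rfl fun x _ => mul_left_comm (η x) α _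
      _ = ∑ x, η x * v x + α * ∑ z, q z * (∑ y, polMat P μJ z y * v y) := by
          rw [hrow]
  -- q dominates η
  have hq_ge : ∀ y, η y ≤ q y := by
    intro y
    have h1 : ∀ x : X, η x * (if x = y then (1:ℝ) else 0) ≤ η x * deltaMat P α μJ x y := by
      intro x
      refine mul_le_mul_of_nonneg_left ?_ (hη0 x)
      have hrec := deltaMat_rec_left hP0 hP1 hα0 hα1 (μ := μJ) x y
      have hnn : 0 ≤ α * ∑ z, polMat P μJ x z * deltaMat P α μJ z y :=
        mul_nonneg hα0.le (Finset.sum_nonneg fun z _ =>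
          mul_nonneg (hP0 _ _ _) (hDJ0 z y))
      linarith
    calc η y = ∑ x, η x * (if x = y then (1:ℝ) else 0) := by simp
      _ ≤ ∑ x, η x * deltaMat P α μJ x y := Finset.sum_le_sum fun x _ => h1 x
      _ = q y := rfl
  -- w pointwise bound
  have hw_le : ∀ y, w y ≤ α * (∑ z, polMat P μJ y z * (Jstar z - J z))
      + α * (∑ z, polMat P μs y z * (J z - Jstar z)) := by
    intro y
    have e1 := hpolT_diff μJ Jstar J y
    have e2 := hpolT_diff μs J Jstar y
    have e3 := hbell_le_pol μs J y
    have e4 := hμJ' y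
    have e5 := hμs' y
    simp only [hwdef]
    linarith
  -- J - J* ≤ DS s
  have hu_le : ∀ x, J x - Jstar x ≤ ∑ y, deltaMat P α μs x y * s y := by
    have hpt : ∀ y, J y - Jstar y
        ≤ α * ∑ z, polMat P μs y z * (J z - Jstar z) + s y := by
      intro y
      have e2 := hpolT_diff μs J Jstar y
      have e3 := hbell_le_pol μs J y
      have e5 := hμs' y
      have e6 := hsJ y
      linarith
    intro x
    have mono : ∑ y, deltaMat P α μs x y * (J y - Jstar y)
        ≤ ∑ y, deltaMat P α μs x y
            * (α * ∑ z, polMat P μs y z * (J z - Jstar z) + s y) :=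
      Finset.sum_le_sum fun y _ => mul_le_mul_of_nonneg_left (hpt y) (hDS0 x y)
    have distr : ∑ y, deltaMat P α μs x y
          * (α * ∑ z, polMat P μs y z * (J z - Jstar z) + s y)
        = α * ∑ y, deltaMat P α μs x y * (∑ z, polMat P μs y z * (J z - Jstar z))
          + ∑ y, deltaMat P α μs x y * s y := by
      simp only [mul_add, Finset.sum_add_distrib]
      congr 1
      rw [Finset.mul_sum]
      exact Finset.sum_congr rfl fun y _ => mul_left_comm _ _ _
    have hK := K7S (fun z => J z - Jstar z) x
    rw [distr] at mono
    linarith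
  -- final chain
  have hF0 : ∀ x, 0 ≤ Jpol g P α μJ x - Jstar x := by
    intro x
    rw [hJdiff x]
    exact Finset.sum_nonneg fun y _ => mul_nonneg (hDJ0 x y) (hw0 y)
  have hLHS : wnorm1 η (fun x => Jpol g P α μJ x - Jstar x) = ∑ y, q y * w y := by
    calc wnorm1 η (fun x => Jpol g P α μJ x - Jstar x)
        = ∑ x, η x * (Jpol g P α μJ x - Jstar x) := by
          refine Finset.sum_congr rfl fun x _ => ?_
          rw [abs_of_nonneg (hF0 x)]
      _ = ∑ x, η x * (∑ y, deltaMat P α μJ x y * w y) :=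
          Finset.sum_congr rfl fun x _ => by rw [hJdiff x]
      _ = ∑ y, q y * w y := hrow w
  -- step 1-2
  have step1 : ∑ y, q y * w y
      ≤ α * (∑ y, q y * (∑ z, polMat P μJ y z * (Jstar z - J z)))
        + α * (∑ y, q y * (∑ z, polMat P μs y z * (J z - Jstar z))) := by
    have h := Finset.sum_le_sum (fun y (_ : y ∈ Finset.univ) =>
      mul_le_mul_of_nonneg_left (hw_le y) (hq0 y))
    calc ∑ y, q y * w y
        ≤ ∑ y, q y * (α * (∑ z, polMat P μJ y z * (Jstar z - J z))
            + α * (∑ z, polMat P μs y z * (J z - Jstar z))) := h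
      _ = α * (∑ y, q y * (∑ z, polMat P μJ y z * (Jstar z - J z)))
          + α * (∑ y, q y * (∑ z, polMat P μs y z * (J z - Jstar z))) := by
          simp only [mul_add, Finset.sum_add_distrib]
          congr 1 <;>
          · rw [Finset.mul_sum]
            exact Finset.sum_congr rfl fun y _ => mul_left_comm _ _ _
  -- term 1 via R7
  have hT1 : α * (∑ y, q y * (∑ z, polMat P μJ y z * (Jstar z - J z)))
      = ∑ y, q y * (Jstar y - J y) - ∑ x, η x * (Jstar x - J x) := by
    have := R7 (fun z => Jstar z - J z)
    linarith
  -- η (J - J*) ≤ q (DS s)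
  have hT2 : ∑ x, η x * (J x - Jstar x) ≤ ∑ y, q y * (∑ z, deltaMat P α μs y z * s z) := by
    have hDSs0 : ∀ x, 0 ≤ ∑ z, deltaMat P α μs x z * s z :=
      fun x => Finset.sum_nonneg fun z _ => mul_nonneg (hDS0 x z) (hs0 z)
    calc ∑ x, η x * (J x - Jstar x)
        ≤ ∑ x, η x * (∑ z, deltaMat P α μs x z * s z) :=
          Finset.sum_le_sum fun x _ => mul_le_mul_of_nonneg_left (hu_le x) (hη0 x)
      _ ≤ ∑ y, q y * (∑ z, deltaMat P α μs y z * s z) :=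
          Finset.sum_le_sum fun y _ => mul_le_mul_of_nonneg_right (hq_ge y) (hDSs0 y)
  -- term 2
  have hT3 : α * (∑ y, q y * (∑ z, polMat P μs y z * (J z - Jstar z)))
      ≤ ∑ y, q y * (∑ z, deltaMat P α μs y z * s z) := by
    have hm : ∀ y, ∑ z, polMat P μs y z * (J z - Jstar z)
        ≤ ∑ z, polMat P μs y z * (∑ z', deltaMat P α μs z z' * s z') :=
      fun y => Finset.sum_le_sum fun z _ =>
        mul_le_mul_of_nonneg_left (hu_le z) (hP0 _ _ _)
    have h1 : ∑ y, q y * (∑ z, polMat P μs y z * (J z - Jstar z))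
        ≤ ∑ y, q y * (∑ z, polMat P μs y z * (∑ z', deltaMat P α μs z z' * s z')) :=
      Finset.sum_le_sum fun y _ => mul_le_mul_of_nonneg_left (hm y) (hq0 y)
    have h2 : ∀ y, α * (∑ z, polMat P μs y z * (∑ z', deltaMat P α μs z z' * s z'))
        = (∑ z, deltaMat P α μs y z * s z) - s y := by
      intro y
      have := K6S s y
      linarith
    have h3 : α * (∑ y, q y * (∑ z, polMat P μs y z * (∑ z', deltaMat P α μs z z' * s z')))
        = ∑ y, q y * ((∑ z, deltaMat P α μs y z * s z) - s y) := by
      rw [Finset.mul_sum]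
      refine Finset.sum_congr rfl fun y _ => ?_
      rw [← h2 y]
      ring
    have h4 : ∑ y, q y * ((∑ z, deltaMat P α μs y z * s z) - s y)
        ≤ ∑ y, q y * (∑ z, deltaMat P α μs y z * s z) := by
      refine Finset.sum_le_sum fun y _ => ?_
      have : 0 ≤ q y * s y := mul_nonneg (hq0 y) (hs0 y)
      nlinarith [hq0 y]
    calc α * (∑ y, q y * (∑ z, polMat P μs y z * (J z - Jstar z)))
        ≤ α * (∑ y, q y * (∑ z, polMat P μs y z * (∑ z', deltaMat P α μs z z' * s z'))) :=
          mul_le_mul_of_nonneg_left h1 hα0.le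
      _ = ∑ y, q y * ((∑ z, deltaMat P α μs y z * s z) - s y) := h3
      _ ≤ ∑ y, q y * (∑ z, deltaMat P α μs y z * s z) := h4
  -- RHS equality
  have h1α : (1 : ℝ) - α ≠ 0 := by linarith
  have hpi1 : ∀ x, piDist P α μJ η x = (1 - α) * q x := fun x => rfl
  have hpi2 : ∀ x, piDist P α μs (piDist P α μJ η) x
      = (1 - α) ^ 2 * ∑ y, q y * deltaMat P α μs y x := by
    intro x
    show (1 - α) * ∑ y, piDist P α μJ η y * deltaMat P α μs y x = _
    rw [Finset.sum_congr rfl fun y _ => by rw [hpi1 y]]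
    rw [Finset.mul_sum, Finset.mul_sum]
    exact Finset.sum_congr rfl fun y _ => by ring
  have hRHS : (1 / (1 - α)) *
        ((∑ x, piDist P α μJ η x * (Jstar x - J x)) +
          (2 / (1 - α)) *
            ∑ x, piDist P α μs (piDist P α μJ η) x * max (J x - bellmanT g P α J x) 0)
      = ∑ y, q y * (Jstar y - J y) + 2 * ∑ y, q y * (∑ z, deltaMat P α μs y z * s z) := by
    have e1 : ∑ x, piDist P α μJ η x * (Jstar x - J x)
        = (1 - α) * ∑ y, q y * (Jstar y - J y) := by
      rw [Finset.mul_sum]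
      exact Finset.sum_congr rfl fun x _ => by rw [hpi1 x]; ring
    have e2 : ∑ x, piDist P α μs (piDist P α μJ η) x * max (J x - bellmanT g P α J x) 0
        = (1 - α) ^ 2 * ∑ y, q y * (∑ z, deltaMat P α μs y z * s z) := by
      calc ∑ x, piDist P α μs (piDist P α μJ η) x * max (J x - bellmanT g P α J x) 0
          = ∑ x, ((1 - α) ^ 2 * ∑ y, q y * deltaMat P α μs y x) * s x :=
            Finset.sum_congr rfl fun x _ => by rw [hpi2 x]
        _ = (1 - α) ^ 2 * ∑ x, (∑ y, q y * deltaMat P α μs y x) * s x := by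
            rw [Finset.mul_sum]
            exact Finset.sum_congr rfl fun x _ => by ring
        _ = (1 - α) ^ 2 * ∑ y, q y * (∑ z, deltaMat P α μs y z * s z) := by
            congr 1
            simp_rw [Finset.sum_mul]
            rw [Finset.sum_comm]
            refine Finset.sum_congr rfl fun y _ => ?_
            rw [Finset.mul_sum]
            exact Finset.sum_congr rfl fun x _ => by ring
    rw [e1, e2]
    field_simp
  have hneg : ∑ x, η x * (Jstar x - J x) = - ∑ x, η x * (J x - Jstar x) := by
    rw [← Finset.sum_neg_distrib]
    exact Finset.sum_congr rfl fun x _ => by ring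
  rw [hLHS, hRHS]
  linarith [step1, hT1, hT2, hT3, hneg]
end
end

section
/- For any J ∈ ℝ^𝒳, setting s = (J − TJ)^+ (the componentwise positive part), one has TJ ≤ T_{μ*} J ≤ J* + Δ* s, where Δ* = (I − α P_{μ*})^{−1}. -/
open Finset Matrix

noncomputable section

section Aux

variable {X : Type*} [Fintype X] [DecidableEq X]

lemma aux_pow_nonneg (M : Matrix X X ℝ) (hM : ∀ x y, 0 ≤ M x y) :
    ∀ (k : ℕ) (x y : X), 0 ≤ (M ^ k) x y := by
  intro k
  induction k with
  | zero =>
    intro x y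
    rw [pow_zero]
    by_cases h : x = y <;> simp [Matrix.one_apply, h]
  | succ n ih =>
    intro x y
    rw [pow_succ, Matrix.mul_apply]
    exact Finset.sum_nonneg fun z _ => mul_nonneg (ih x z) (hM z y)

lemma aux_pow_row_sum (M : Matrix X X ℝ) (hM : ∀ x, ∑ y, M x y = 1) :
    ∀ (k : ℕ) (x : X), ∑ y, (M ^ k) x y = 1 := by
  intro k
  induction k with
  | zero =>
    intro x
    simp [pow_zero, Matrix.one_apply]
  | succ n ih =>
    intro x
    simp only [pow_succ, Matrix.mul_apply]
    rw [Finset.sum_comm]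
    calc ∑ z, ∑ y, (M ^ n) x z * M z y
        = ∑ z, (M ^ n) x z * ∑ y, M z y := by
          simp [Finset.mul_sum]
      _ = 1 := by simp [hM, ih x]

lemma aux_mulVec_mono (M : Matrix X X ℝ) (hM : ∀ x y, 0 ≤ M x y) {u v : X → ℝ}
    (h : ∀ x, u x ≤ v x) (x : X) : (M *ᵥ u) x ≤ (M *ᵥ v) x := by
  simp only [Matrix.mulVec, dotProduct]
  exact Finset.sum_le_sum fun y _ => mul_le_mul_of_nonneg_left (h y) (hM x y)

end Aux

/-- with s = (J - TJ)^+, one has TJ ≤ T_{μ*}J ≤ J* + Δ* s. -/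
theorem TJ_le_Tmustar_le_Jstar_add
    {X A : Type*} [Fintype X] [Nonempty X] [Fintype A] [Nonempty A] [DecidableEq X]
    (g : X → A → ℝ) (P : A → X → X → ℝ) (α : ℝ)
    (hα0 : 0 < α) (hα1 : α < 1)
    (hP0 : ∀ a x x', 0 ≤ P a x x') (hP1 : ∀ a x, ∑ x', P a x x' = 1)
    (Jstar : X → ℝ) (hJstar : bellmanT g P α Jstar = Jstar)
    (μs : X → A) (hμs : polT g P α μs Jstar = bellmanT g P α Jstar)
    (J : X → ℝ) :
    ∀ x, bellmanT g P α J x ≤ polT g P α μs J x ∧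
      polT g P α μs J x ≤
        Jstar x + (deltaMat P α μs *ᵥ (fun y => max (J y - bellmanT g P α J y) 0)) x := by
  set M : Matrix X X ℝ := polMat P μs with hMdef
  set Q : Matrix X X ℝ := α • M with hQdef
  set s : X → ℝ := fun y => max (J y - bellmanT g P α J y) 0 with hsdef
  have hs0 : ∀ y, 0 ≤ s y := fun y => le_max_right _ _
  have hM0 : ∀ x y, 0 ≤ M x y := fun x y => hP0 (μs x) x y
  have hM1 : ∀ x, ∑ y, M x y = 1 := fun x => hP1 (μs x) x
  have hQ0 : ∀ x y, 0 ≤ Q x y := fun x y =>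
    mul_nonneg hα0.le (hM0 x y)
  have hQpow0 : ∀ (k : ℕ) (x y : X), 0 ≤ (Q ^ k) x y := aux_pow_nonneg Q hQ0
  have hQpow_sum : ∀ (k : ℕ) (x : X), ∑ y, (Q ^ k) x y = α ^ k := by
    intro k x
    have : Q ^ k = α ^ k • M ^ k := smul_pow α M k
    rw [this]
    simp only [Matrix.smul_apply, smul_eq_mul]
    rw [← Finset.mul_sum, aux_pow_row_sum M hM1 k x, mul_one]
  have hQpow_le : ∀ (k : ℕ) (x y : X), (Q ^ k) x y ≤ α ^ k := by
    intro k x y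
    rw [← hQpow_sum k x]
    exact Finset.single_le_sum (fun z _ => hQpow0 k x z) (Finset.mem_univ y)
  -- summability of entries
  have hsum_entry : ∀ x y : X, Summable fun k : ℕ => (Q ^ k) x y := by
    intro x y
    exact Summable.of_nonneg_of_le (fun k => hQpow0 k x y) (fun k => hQpow_le k x y)
      (summable_geometric_of_lt_one hα0.le hα1)
  have hsumQ : Summable fun k : ℕ => Q ^ k := by
    refine Pi.summable.mpr ?_
    intro x
    rw [Pi.summable]
    intro y
    exact hsum_entry x y
  have hdelta_entry : ∀ x y : X, deltaMat P α μs x y = ∑' k : ℕ, (Q ^ k) x y := by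
    intro x y
    have h1 : (∑' k : ℕ, Q ^ k) x = ∑' k : ℕ, (Q ^ k) x := tsum_apply hsumQ
    have h2 : (∑' k : ℕ, (Q ^ k) x) y = ∑' k : ℕ, (Q ^ k) x y :=
      tsum_apply (Pi.summable.mpr (hsum_entry x))
    show (∑' k : ℕ, Q ^ k) x y = _
    rw [h1, h2]
  -- (Δ *ᵥ u) x = ∑' k, (Q^k *ᵥ u) x  for any u
  have hsum_mv : ∀ (u : X → ℝ) (x : X), Summable fun k : ℕ => (Q ^ k *ᵥ u) x := by
    intro u x
    have : ∀ k, (Q ^ k *ᵥ u) x = ∑ y, (Q ^ k) x y * u y := fun k => rfl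
    simp only [this]
    exact summable_sum fun y _ => (hsum_entry x y).mul_right (u y)
  have hdelta_mv : ∀ (u : X → ℝ) (x : X),
      (deltaMat P α μs *ᵥ u) x = ∑' k : ℕ, (Q ^ k *ᵥ u) x := by
    intro u x
    have : (deltaMat P α μs *ᵥ u) x = ∑ y, deltaMat P α μs x y * u y := rfl
    rw [this]
    calc ∑ y, deltaMat P α μs x y * u y
        = ∑ y, ∑' k : ℕ, (Q ^ k) x y * u y := by
          refine Finset.sum_congr rfl fun y _ => ?_
          rw [hdelta_entry x y, tsum_mul_right]
      _ = ∑' k : ℕ, ∑ y, (Q ^ k) x y * u y := by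
          exact (Summable.tsum_finsetSum fun y _ => (hsum_entry x y).mul_right (u y)).symm
      _ = ∑' k : ℕ, (Q ^ k *ᵥ u) x := rfl
  -- T J ≤ T_{μs} J
  have hTle : ∀ (W : X → ℝ) (x : X), bellmanT g P α W x ≤ polT g P α μs W x := by
    intro W x
    exact Finset.inf'_le _ (Finset.mem_univ (μs x))
  -- h := J - Jstar satisfies h ≤ Q h + s
  set h : X → ℝ := fun y => J y - Jstar y with hhdef
  have hpol_lin : ∀ (u v : X → ℝ) (x : X),
      polT g P α μs u x - polT g P α μs v x = (Q *ᵥ fun y => u y - v y) x := by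
    intro u v x
    show (g x (μs x) + α * ∑ x', P (μs x) x x' * u x') -
        (g x (μs x) + α * ∑ x', P (μs x) x x' * v x') = ∑ y, (α • M) x y * (u y - v y)
    have : ∀ y : X, (α • M) x y * (u y - v y) = α * (P (μs x) x y * u y) - α * (P (μs x) x y * v y) := by
      intro y
      show α * M x y * (u y - v y) = _
      show α * P (μs x) x y * (u y - v y) = _
      ring
    rw [Finset.sum_congr rfl fun y _ => this y, Finset.sum_sub_distrib, ← Finset.mul_sum,
      ← Finset.mul_sum]
    ring
  have hJstar_fix : ∀ x, polT g P α μs Jstar x = Jstar x := by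
    intro x
    rw [hμs, hJstar]
  have hkey : ∀ x, h x ≤ (Q *ᵥ h) x + s x := by
    intro x
    have h1 : J x - bellmanT g P α J x ≤ s x := le_max_left _ _
    have h2 : bellmanT g P α J x ≤ polT g P α μs J x := hTle J x
    have h3 : polT g P α μs J x - Jstar x = (Q *ᵥ h) x := by
      rw [← hJstar_fix x]
      exact hpol_lin J Jstar x
    have := hpol_lin J Jstar x
    simp only [hhdef]
    linarith
  -- iterate: h ≤ ∑_{k<n} (Q^k s) + Q^n h
  have hiter : ∀ (n : ℕ) (x : X),
      h x ≤ (∑ k ∈ Finset.range n, (Q ^ k *ᵥ s) x) + (Q ^ n *ᵥ h) x := by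
    intro n
    induction n with
    | zero =>
      intro x
      simp [Matrix.one_mulVec]
    | succ n ih =>
      intro x
      have step : ∀ y, h y ≤ (Q *ᵥ h) y + s y := hkey
      have mono : (Q ^ n *ᵥ h) x ≤ (Q ^ n *ᵥ fun y => (Q *ᵥ h) y + s y) x :=
        aux_mulVec_mono (Q ^ n) (hQpow0 n) step x
      have expand : (Q ^ n *ᵥ fun y => (Q *ᵥ h) y + s y) x
          = (Q ^ (n + 1) *ᵥ h) x + (Q ^ n *ᵥ s) x := by
        have e1 : (fun y => (Q *ᵥ h) y + s y) = (Q *ᵥ h) + s := rfl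
        rw [e1, Matrix.mulVec_add, Matrix.mulVec_mulVec, ← pow_succ, Pi.add_apply]
      calc h x ≤ (∑ k ∈ Finset.range n, (Q ^ k *ᵥ s) x) + (Q ^ n *ᵥ h) x := ih x
        _ ≤ (∑ k ∈ Finset.range n, (Q ^ k *ᵥ s) x) + ((Q ^ (n + 1) *ᵥ h) x + (Q ^ n *ᵥ s) x) := by
            rw [← expand]; linarith [mono]
        _ = (∑ k ∈ Finset.range (n + 1), (Q ^ k *ᵥ s) x) + (Q ^ (n + 1) *ᵥ h) x := by
            rw [Finset.sum_range_succ]; ring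
  -- Q^n h → 0
  set C : ℝ := Finset.univ.sup' Finset.univ_nonempty fun y => |h y| with hCdef
  have habsC : ∀ y, |h y| ≤ C := fun y => Finset.le_sup' (fun z => |h z|) (Finset.mem_univ y)
  have hC0 : 0 ≤ C := le_trans (abs_nonneg _) (habsC (Classical.arbitrary X))
  have hQnh : ∀ (n : ℕ) (x : X), (Q ^ n *ᵥ h) x ≤ α ^ n * C := by
    intro n x
    have : (Q ^ n *ᵥ h) x = ∑ y, (Q ^ n) x y * h y := rfl
    rw [this, ← hQpow_sum n x, Finset.sum_mul]
    refine Finset.sum_le_sum fun y _ => ?_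
    have := habsC y
    have := hQpow0 n x y
    nlinarith [le_abs_self (h y), abs_nonneg (h y)]
  -- take limits
  have hmain : ∀ x, h x ≤ (deltaMat P α μs *ᵥ s) x := by
    intro x
    have hlim1 : Filter.Tendsto (fun n => ∑ k ∈ Finset.range n, (Q ^ k *ᵥ s) x)
        Filter.atTop (nhds ((deltaMat P α μs *ᵥ s) x)) := by
      rw [hdelta_mv s x]
      exact ((hsum_mv s x).hasSum).tendsto_sum_nat
    have hlim2 : Filter.Tendsto (fun n : ℕ => α ^ n * C) Filter.atTop (nhds 0) := by
      have := tendsto_pow_atTop_nhds_zero_of_lt_one hα0.le hα1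
      simpa using this.mul_const C
    have hlim : Filter.Tendsto
        (fun n => (∑ k ∈ Finset.range n, (Q ^ k *ᵥ s) x) + α ^ n * C)
        Filter.atTop (nhds ((deltaMat P α μs *ᵥ s) x)) := by
      simpa using hlim1.add hlim2
    refine le_of_tendsto_of_tendsto tendsto_const_nhds hlim ?_
    filter_upwards with n
    exact le_trans (hiter n x) (by linarith [hQnh n x])
  -- conclude
  intro x
  refine ⟨hTle J x, ?_⟩
  have h3 : polT g P α μs J x - Jstar x = (Q *ᵥ h) x := by
    rw [← hJstar_fix x]
    exact hpol_lin J Jstar x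
  have mono : (Q *ᵥ h) x ≤ (Q *ᵥ (deltaMat P α μs *ᵥ s)) x :=
    aux_mulVec_mono Q hQ0 hmain x
  have shift : (Q *ᵥ (deltaMat P α μs *ᵥ s)) x = ∑' k : ℕ, (Q ^ (k + 1) *ᵥ s) x := by
    have e : ∀ k : ℕ, (Q ^ (k + 1) *ᵥ s) = Q *ᵥ (Q ^ k *ᵥ s) := by
      intro k
      rw [Matrix.mulVec_mulVec, ← pow_succ']
    calc (Q *ᵥ (deltaMat P α μs *ᵥ s)) x
        = ∑ y, Q x y * (deltaMat P α μs *ᵥ s) y := rfl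
      _ = ∑ y, ∑' k : ℕ, Q x y * (Q ^ k *ᵥ s) y := by
          refine Finset.sum_congr rfl fun y _ => ?_
          rw [hdelta_mv s y, ← tsum_mul_left]
      _ = ∑' k : ℕ, ∑ y, Q x y * (Q ^ k *ᵥ s) y := by
          exact (Summable.tsum_finsetSum fun y _ => (hsum_mv s y).mul_left (Q x y)).symm
      _ = ∑' k : ℕ, (Q ^ (k + 1) *ᵥ s) x := by
          refine tsum_congr fun k => ?_
          rw [e k]
          rfl
  have tele : ∑' k : ℕ, (Q ^ (k + 1) *ᵥ s) x ≤ ∑' k : ℕ, (Q ^ k *ᵥ s) x := by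
    have h0 : (Q ^ 0 *ᵥ s) x = s x := by simp [Matrix.one_mulVec]
    rw [Summable.tsum_eq_zero_add (hsum_mv s x), h0]
    linarith [hs0 x]
  have final : (Q *ᵥ h) x ≤ (deltaMat P α μs *ᵥ s) x := by
    rw [hdelta_mv s x]
    calc (Q *ᵥ h) x ≤ (Q *ᵥ (deltaMat P α μs *ᵥ s)) x := mono
      _ = ∑' k : ℕ, (Q ^ (k + 1) *ᵥ s) x := shift
      _ ≤ ∑' k : ℕ, (Q ^ k *ᵥ s) x := tele
  linarith [final, h3]
end
end
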